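/- arXiv:1812.05833 — 4 statements merged into one kernel-verified Lean document; each statement's English description precedes it below -/
import Mathlib

section
/- For every integer n > 1, the unitary Cayley graph X_n admits a proper total coloring with φ(n) + 2 colors, where φ is Euler's totient function; that is, χ''(X_n) ≤ Δ(X_n) + 2, so X_n satisfies the Total Coloring Conjecture. -/
/-- A proper total coloring of `G` with `k` colors: `cv` colors the vertices,
`ce` colors the edges (as a symmetric function on adjacent pairs); adjacent
vertices get distinct colors, edges sharing an endpoint get distinct colors,
and an edge's color differs from the colors of both its endpoints. -/
def IsTotalColoring {V : Type*} (G : SimpleGraph V) (k : ℕ)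
    (cv : V → Fin k) (ce : V → V → Fin k) : Prop :=
  (∀ u v, G.Adj u v → cv u ≠ cv v) ∧
  (∀ u v, G.Adj u v → ce u v = ce v u) ∧
  (∀ u v w, G.Adj u v → G.Adj u w → v ≠ w → ce u v ≠ ce u w) ∧
  (∀ u v, G.Adj u v → ce u v ≠ cv u ∧ ce u v ≠ cv v)

/-- `G` admits a proper total coloring with `k` colors. -/
def TotalColorable {V : Type*} (G : SimpleGraph V) (k : ℕ) : Prop :=
  ∃ cv ce, IsTotalColoring G k cv ce

/-- The unitary Cayley graph `X_n`: vertices are `ZMod n`, and `a` is adjacent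
to `b` iff `a - b` is a unit of `ZMod n` (equivalently, `gcd(a - b, n) = 1`). -/
def unitaryCayleyGraph (n : ℕ) : SimpleGraph (ZMod n) where
  Adj a b := a ≠ b ∧ IsUnit (a - b)
  symm := ⟨by
    rintro a b ⟨hab, hu⟩
    exact ⟨hab.symm, by simpa [neg_sub] using hu.neg⟩⟩
  loopless := ⟨fun a h => h.1 rfl⟩

/-- Transfer: a "total coloring" valued in any type `C` that injects into `Fin k`
gives `TotalColorable G k`. -/
lemma totalColorable_of_inj {V : Type*} (G : SimpleGraph V) (k : ℕ) {C : Type*}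
    (f : C → Fin k) (hf : Function.Injective f)
    (cv : V → C) (ce : V → V → C)
    (h1 : ∀ u v, G.Adj u v → cv u ≠ cv v)
    (h2 : ∀ u v, G.Adj u v → ce u v = ce v u)
    (h3 : ∀ u v w, G.Adj u v → G.Adj u w → v ≠ w → ce u v ≠ ce u w)
    (h4 : ∀ u v, G.Adj u v → ce u v ≠ cv u ∧ ce u v ≠ cv v) :
    TotalColorable G k := by
  refine ⟨fun v => f (cv v), fun a b => f (ce a b), ?_, ?_, ?_, ?_⟩
  · exact fun u v h => fun hc => h1 u v h (hf hc)
  · exact fun u v h => congrArg f (h2 u v h)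
  · exact fun u v w h h' hvw hc => h3 u v w h h' hvw (hf hc)
  · exact fun u v h => ⟨fun hc => (h4 u v h).1 (hf hc), fun hc => (h4 u v h).2 (hf hc)⟩

/-- The palette: one color per unit, plus two extra colors. -/
abbrev UCPal (n : ℕ) := (ZMod n)ˣ ⊕ Bool

lemma ucpal_card (n : ℕ) [NeZero n] : Fintype.card (UCPal n) = Nat.totient n + 2 := by
  simp [ZMod.card_units_eq_totient]

lemma ucpal_emb (n : ℕ) [NeZero n] :
    ∃ f : UCPal n → Fin (Nat.totient n + 2), Function.Injective f :=
  ⟨Fintype.equivFinOfCardEq (ucpal_card n), (Fintype.equivFinOfCardEq (ucpal_card n)).injective⟩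

set_option linter.unusedSectionVars false



section EvenCase

variable {n : ℕ} [NeZero n] (he : (2 : ℕ) ∣ n)

noncomputable def evCv (a : ZMod n) : (ZMod n)ˣ ⊕ Bool :=
  if ZMod.castHom he (ZMod 2) a = 0 then Sum.inr false else Sum.inr true

noncomputable def evCe (a b : ZMod n) : (ZMod n)ˣ ⊕ Bool :=
  if h : IsUnit (b - a) then
    (if ZMod.castHom he (ZMod 2) a = 0 then Sum.inl h.unit else Sum.inl (-h.unit))
  else Sum.inr false

lemma zmod2_cases : ∀ x : ZMod 2, x = 0 ∨ x = 1 := by decide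

lemma ev_pi_unit {d : ZMod n} (hd : IsUnit d) : ZMod.castHom he (ZMod 2) d = 1 := by
  have h2 : IsUnit (ZMod.castHom he (ZMod 2) d) := hd.map _
  rcases zmod2_cases (ZMod.castHom he (ZMod 2) d) with h | h
  · rw [h] at h2; exact absurd h2 (by simp)
  · exact h

lemma ev_adj_pi {a b : ZMod n} (h : (unitaryCayleyGraph n).Adj a b) :
    ZMod.castHom he (ZMod 2) b = ZMod.castHom he (ZMod 2) a + 1 := by
  have hu : IsUnit (b - a) := by simpa [neg_sub] using h.2.neg
  have h3 := ev_pi_unit he hu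
  rw [map_sub] at h3
  linear_combination h3

lemma evCe_adj {a b : ZMod n} (h : (unitaryCayleyGraph n).Adj a b) :
    evCe he a b = (if ZMod.castHom he (ZMod 2) a = 0
      then Sum.inl ((by simpa [neg_sub] using h.2.neg : IsUnit (b - a)).unit)
      else Sum.inl (-(by simpa [neg_sub] using h.2.neg : IsUnit (b - a)).unit)) := by
  have hu : IsUnit (b - a) := by simpa [neg_sub] using h.2.neg
  rw [evCe, dif_pos hu]

lemma ev_total :
    (∀ u v, (unitaryCayleyGraph n).Adj u v → evCv he u ≠ evCv he v) ∧
    (∀ u v, (unitaryCayleyGraph n).Adj u v → evCe he u v = evCe he v u) ∧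
    (∀ u v w, (unitaryCayleyGraph n).Adj u v → (unitaryCayleyGraph n).Adj u w → v ≠ w →
      evCe he u v ≠ evCe he u w) ∧
    (∀ u v, (unitaryCayleyGraph n).Adj u v → evCe he u v ≠ evCv he u ∧
      evCe he u v ≠ evCv he v) := by
  refine ⟨?_, ?_, ?_, ?_⟩
  · intro u v h
    have hpi := ev_adj_pi he h
    unfold evCv
    rcases zmod2_cases (ZMod.castHom he (ZMod 2) u) with h0 | h0
    · rw [hpi, h0]
      simp
    · rw [hpi, h0]
      rw [show (1 : ZMod 2) + 1 = 0 by decide]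
      simp
  · intro u v h
    have hvu : (unitaryCayleyGraph n).Adj v u := h.symm
    rw [evCe_adj he h, evCe_adj he hvu]
    have hpi := ev_adj_pi he h
    have huv : IsUnit (u - v) := by simpa [neg_sub] using hvu.2.neg
    have hvu' : IsUnit (v - u) := by simpa [neg_sub] using h.2.neg
    have hunit : huv.unit = -hvu'.unit := by
      ext
      push_cast
      simp only [IsUnit.unit_spec]
      ring
    rcases zmod2_cases (ZMod.castHom he (ZMod 2) u) with h0 | h0
    · have h1 : ZMod.castHom he (ZMod 2) v ≠ 0 := by rw [hpi, h0]; decide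
      rw [if_pos h0, if_neg h1, hunit, neg_neg]
    · have h1 : ZMod.castHom he (ZMod 2) v = 0 := by
        rcases zmod2_cases (ZMod.castHom he (ZMod 2) v) with hv | hv
        · exact hv
        · rw [hv, h0] at hpi; exact absurd hpi (by decide)
      rw [if_neg (by rw [h0]; decide), if_pos h1, hunit]
  · intro u v w h1 h2 hvw
    rw [evCe_adj he h1, evCe_adj he h2]
    have hne : (show IsUnit (v - u) by simpa [neg_sub] using h1.2.neg).unit ≠
        (show IsUnit (w - u) by simpa [neg_sub] using h2.2.neg).unit := by
      intro hc
      apply hvw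
      have hc2 := congrArg (Units.val) hc
      simp only [IsUnit.unit_spec] at hc2
      linear_combination hc2
    split_ifs
    · exact fun hc => hne (Sum.inl_injective hc)
    · refine fun hc => hne ?_
      have := Sum.inl_injective hc
      exact neg_injective this
  · intro u v h
    rw [evCe_adj he h]
    unfold evCv
    constructor <;> split_ifs <;> simp

end EvenCase



section Pattern

variable {q : ℕ} [NeZero q] {C : Type*}

/-- Periodic edge-color pattern around a cycle: break color at position `0`,
then alternating `c1` (odd positions) and `c2` (even positions). -/
def ucpat (cX c1 c2 : C) (k : ZMod q) : C :=
  if k = 0 then cX else if k.val % 2 = 1 then c1 else c2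

lemma zmod_val_sub_one {k : ZMod q} (hk : k ≠ 0) : (k - 1).val = k.val - 1 := by
  have h1 : 1 ≤ k.val := Nat.one_le_iff_ne_zero.2 (fun h => hk ((ZMod.val_eq_zero k).1 h))
  have hlt : k.val - 1 < q := lt_of_le_of_lt (Nat.sub_le _ _) (ZMod.val_lt k)
  have : ((k.val - 1 : ℕ) : ZMod q) = k - 1 := by
    rw [Nat.cast_sub h1]
    simp [ZMod.natCast_val, ZMod.cast_id]
  rw [← this, ZMod.val_cast_of_lt hlt]

lemma zmod_val_neg_one' (hq1 : 1 < q) : ((-1 : ZMod q)).val = q - 1 := by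
  have : ((q - 1 : ℕ) : ZMod q) = -1 := by
    rw [Nat.cast_sub (by omega : 1 ≤ q)]
    simp
  rw [← this, ZMod.val_cast_of_lt (by omega)]

lemma zmod_neg_one_ne_zero (hq1 : 1 < q) : (-1 : ZMod q) ≠ 0 := by
  haveI : Fact (1 < q) := ⟨hq1⟩
  intro h
  have : (1 : ZMod q) = 0 := by linear_combination -h
  exact one_ne_zero this

lemma zmod_val_one' (hq1 : 1 < q) : (1 : ZMod q).val = 1 := by
  rw [ZMod.val_one_eq_one_mod, Nat.mod_eq_of_lt hq1]

variable {cX c1 c2 : C}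

lemma ucpat_mem (k : ZMod q) : ucpat cX c1 c2 k = cX ∨ ucpat cX c1 c2 k = c1 ∨
    ucpat cX c1 c2 k = c2 := by
  unfold ucpat; split_ifs <;> simp

/-- Adjacent edges around the cycle get different colors. -/
lemma ucpat_adj (hq1 : 1 < q) (hqo : Odd q)
    (hX1 : cX ≠ c1) (hX2 : cX ≠ c2) (h12 : c1 ≠ c2) (k : ZMod q) :
    ucpat cX c1 c2 (k - 1) ≠ ucpat cX c1 c2 k := by
  haveI : Fact (1 < q) := ⟨hq1⟩
  rcases eq_or_ne k 0 with rfl | hk0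
  · have hq2 : (q - 1) % 2 = 0 := by
      have := Nat.odd_iff.mp hqo; omega
    unfold ucpat
    rw [show (0 : ZMod q) - 1 = -1 by ring]
    rw [if_neg (zmod_neg_one_ne_zero hq1), if_pos rfl, zmod_val_neg_one' hq1,
      if_neg (by omega)]
    exact hX2.symm
  rcases eq_or_ne k 1 with rfl | hk1
  · unfold ucpat
    simp only [sub_self, if_pos rfl, if_neg hk0]
    rw [zmod_val_one' hq1, if_pos rfl]
    exact hX1
  · have hv1 : k.val ≠ 1 := by
      intro h
      apply hk1
      have hkk : ((k.val : ℕ) : ZMod q) = k := by simp [ZMod.natCast_val, ZMod.cast_id]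
      rw [← hkk, h, Nat.cast_one]
    have hv0 : k.val ≠ 0 := fun h => hk0 ((ZMod.val_eq_zero k).1 h)
    have hsub : (k - 1).val = k.val - 1 := zmod_val_sub_one hk0
    have hne : k - 1 ≠ 0 := by
      intro h
      have : (k - 1).val = 0 := by rw [h]; exact ZMod.val_zero
      omega
    unfold ucpat
    rw [if_neg hne, if_neg hk0, hsub]
    rcases Nat.even_or_odd k.val with he | ho
    · have := Nat.even_iff.mp he
      rw [if_pos (by omega), if_neg (by omega)]
      exact h12
    · have := Nat.odd_iff.mp ho
      rw [if_neg (by omega), if_pos (by omega)]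
      exact h12.symm

lemma ucpat_eq_cX (hX1 : cX ≠ c1) (hX2 : cX ≠ c2) {k : ZMod q}
    (h : ucpat cX c1 c2 k = cX) : k = 0 := by
  by_contra hk
  unfold ucpat at h
  rw [if_neg hk] at h
  split_ifs at h
  · exact hX1 h.symm
  · exact hX2 h.symm

lemma ucpat_eq_c1 (hq1 : 1 < q) (hqo : Odd q) (hX1 : cX ≠ c1) (h12 : c1 ≠ c2)
    {k : ZMod q} (h : ucpat cX c1 c2 k = c1) : k ≠ 0 ∧ k ≠ -1 := by
  unfold ucpat at h
  constructor
  · intro hk; rw [if_pos hk] at h; exact hX1 h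
  · intro hk
    rw [if_neg (hk ▸ zmod_neg_one_ne_zero hq1), hk, zmod_val_neg_one' hq1] at h
    have hq2 : (q - 1) % 2 = 0 := by have := Nat.odd_iff.mp hqo; omega
    rw [if_neg (by omega)] at h
    exact h12 h.symm

lemma ucpat_eq_c2 (hq1 : 1 < q) (hX2 : cX ≠ c2) (h12 : c1 ≠ c2)
    {k : ZMod q} (h : ucpat cX c1 c2 k = c2) : k ≠ 0 ∧ k ≠ 1 := by
  haveI : Fact (1 < q) := ⟨hq1⟩
  unfold ucpat at h
  constructor
  · intro hk; rw [if_pos hk] at h; exact hX2 h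
  · intro hk
    rw [if_neg (hk ▸ one_ne_zero), hk, zmod_val_one' hq1, if_pos rfl] at h
    exact h12 h

lemma ucpat_ne (hd1 : d ≠ cX) (hd2 : d ≠ c1) (hd3 : d ≠ c2) (k : ZMod q) :
    ucpat cX c1 c2 k ≠ d := by
  unfold ucpat; split_ifs
  exacts [hd1.symm, hd2.symm, hd3.symm]

end Pattern


section OddCase

variable {n p : ℕ} [NeZero n] [Fact p.Prime]
  (hn1 : 1 < n) (hno : Odd n) (hpn : p ∣ n) (hp2 : p ≠ 2)
  (t : ZMod p → (ZMod n)ˣ)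
  (ht1 : ∀ j : ZMod p, j ≠ 0 → ZMod.castHom hpn (ZMod p) ((t j : ZMod n)) = -2 * j)
  (ht2 : ∀ j : ZMod p, j ≠ 0 → t (-j) = -(t j))
  (u2 : (ZMod n)ˣ) (hu2 : (u2 : ZMod n) = 2)

lemma oc_hp1 : 1 < p := (Fact.out : p.Prime).one_lt

include hp2 in
lemma oc_hpo : Odd p := (Fact.out : p.Prime).odd_of_ne_two hp2

include hn1 hno in
lemma oc_h2n : (2 : ZMod n) ≠ 0 := by
  intro h
  have h2 : ((2 : ℕ) : ZMod n) = 0 := by exact_mod_cast h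
  have hd := (ZMod.natCast_eq_zero_iff 2 n).1 h2
  have hle := Nat.le_of_dvd (by norm_num) hd
  rcases hno with ⟨m, hm⟩
  omega

include hp2 in
lemma oc_h2p : (2 : ZMod p) ≠ 0 := by
  intro h
  have h2 : ((2 : ℕ) : ZMod p) = 0 := by exact_mod_cast h
  have hd := (ZMod.natCast_eq_zero_iff 2 p).1 h2
  have hle := Nat.le_of_dvd (by norm_num) hd
  have h2le := (Fact.out : p.Prime).two_le
  omega

lemma oc_pi_unit (w : (ZMod n)ˣ) : ZMod.castHom hpn (ZMod p) (w : ZMod n) ≠ 0 := by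
  have : IsUnit (ZMod.castHom hpn (ZMod p) (w : ZMod n)) := (Units.isUnit w).map _
  exact this.ne_zero

include ht1 hp2 in
lemma oc_tinj {j j' : ZMod p} (hj : j ≠ 0) (hj' : j' ≠ 0) (h : t j = t j') : j = j' := by
  have h1 := ht1 j hj
  have h2 := ht1 j' hj'
  rw [h, h2] at h1
  have : (-2 : ZMod p) ≠ 0 := by
    simpa [neg_eq_zero] using oc_h2p (p := p) hp2
  exact mul_left_cancel₀ this h1.symm

include hn1 hno ht2 in
lemma oc_t_ne_neg {j : ZMod p} (hj : j ≠ 0) : t j ≠ t (-j) := by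
  rw [ht2 j hj]
  intro h
  have hc : (t j : ZMod n) = -(t j : ZMod n) := by
    have := congrArg (Units.val) h
    simpa using this
  have h2 : (2 : ZMod n) * (t j : ZMod n) = 0 := by linear_combination hc
  exact oc_h2n hn1 hno (((Units.isUnit (t j)).mul_left_eq_zero).1 h2)

/-- parity of `val` flips under negation, for odd modulus. -/
lemma oc_val_neg_parity {q : ℕ} [NeZero q] (hq : Odd q) {x : ZMod q} (hx : x ≠ 0) :
    (-x).val % 2 = 1 - x.val % 2 := by
  haveI : NeZero x := ⟨hx⟩
  rw [ZMod.val_neg_of_ne_zero x]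
  have h1 : 1 ≤ x.val := Nat.one_le_iff_ne_zero.2 (fun h => hx ((ZMod.val_eq_zero x).1 h))
  have h2 : x.val < q := ZMod.val_lt x
  have := Nat.odd_iff.mp hq
  omega


/-- position (mod `p`) along a special cycle with step `t j₀`. -/
noncomputable def kap (j₀ : ZMod p) (x : ZMod n) : ZMod p :=
  (ZMod.castHom hpn (ZMod p) x - j₀) * (-(2 * j₀))⁻¹

include hp2 in
lemma oc_negtwo_ne {j₀ : ZMod p} (hj : j₀ ≠ 0) : (-(2 * j₀) : ZMod p) ≠ 0 := by
  intro h
  rw [neg_eq_zero, mul_eq_zero] at h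
  rcases h with h | h
  · exact oc_h2p hp2 h
  · exact hj h

include hp2 ht1 in
lemma kap_add {j₀ : ZMod p} (hj : j₀ ≠ 0) (x : ZMod n) :
    kap hpn j₀ (x + (t j₀ : ZMod n)) = kap hpn j₀ x + 1 := by
  unfold kap
  rw [map_add, ht1 j₀ hj]
  have hne := oc_negtwo_ne hp2 hj
  have : (ZMod.castHom hpn (ZMod p) x + -2 * j₀ - j₀) * (-(2 * j₀))⁻¹ =
      (ZMod.castHom hpn (ZMod p) x - j₀) * (-(2 * j₀))⁻¹ + (-(2 * j₀)) * (-(2 * j₀))⁻¹ := by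
    ring
  rw [this, mul_inv_cancel₀ hne]

include hp2 in
lemma kap_zero_iff {j₀ : ZMod p} (hj : j₀ ≠ 0) (x : ZMod n) :
    kap hpn j₀ x = 0 ↔ ZMod.castHom hpn (ZMod p) x = j₀ := by
  unfold kap
  rw [mul_eq_zero, sub_eq_zero]
  have hne := inv_ne_zero (oc_negtwo_ne hp2 hj)
  exact ⟨fun h => h.resolve_right hne, Or.inl⟩

include hp2 in
lemma kap_one_iff {j₀ : ZMod p} (hj : j₀ ≠ 0) (x : ZMod n) :
    kap hpn j₀ x = 1 ↔ ZMod.castHom hpn (ZMod p) x = -j₀ := by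
  unfold kap
  rw [mul_inv_eq_one₀ (oc_negtwo_ne hp2 hj), sub_eq_iff_eq_add]
  constructor <;> intro h <;> [skip; rw [h]] <;> [rw [h]; skip] <;> ring

/-- position (mod `n`) along a nonspecial cycle with step `w`. -/
noncomputable def posn (w : (ZMod n)ˣ) (c : ZMod n) : ZMod n :=
  (c + ((w * u2⁻¹ : (ZMod n)ˣ) : ZMod n)) * ((w⁻¹ : (ZMod n)ˣ) : ZMod n)

lemma posn_add (w : (ZMod n)ˣ) (c : ZMod n) :
    posn u2 w (c + (w : ZMod n)) = posn u2 w c + 1 := by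
  unfold posn
  have h1 : (w : ZMod n) * ((w⁻¹ : (ZMod n)ˣ) : ZMod n) = 1 := Units.mul_inv w
  calc (c + (w : ZMod n) + ((w * u2⁻¹ : (ZMod n)ˣ) : ZMod n)) * ((w⁻¹ : (ZMod n)ˣ) : ZMod n)
      = (c + ((w * u2⁻¹ : (ZMod n)ˣ) : ZMod n)) * ((w⁻¹ : (ZMod n)ˣ) : ZMod n)
        + (w : ZMod n) * ((w⁻¹ : (ZMod n)ˣ) : ZMod n) := by ring
    _ = _ := by rw [h1]

lemma posn_zero_iff (w : (ZMod n)ˣ) (c : ZMod n) :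
    posn u2 w c = 0 ↔ c = -((w * u2⁻¹ : (ZMod n)ˣ) : ZMod n) := by
  unfold posn
  rw [Units.mul_left_eq_zero, add_eq_zero_iff_eq_neg]

include hu2 in
lemma oc_half_twice (w : (ZMod n)ˣ) :
    ((w * u2⁻¹ : (ZMod n)ˣ) : ZMod n) + ((w * u2⁻¹ : (ZMod n)ˣ) : ZMod n) = (w : ZMod n) := by
  have h : ((u2⁻¹ : (ZMod n)ˣ) : ZMod n) * 2 = 1 := by
    rw [← hu2]; exact Units.inv_mul u2
  push_cast
  calc (w : ZMod n) * ((u2⁻¹ : (ZMod n)ˣ) : ZMod n) + (w : ZMod n) * ((u2⁻¹ : (ZMod n)ˣ) : ZMod n)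
      = (w : ZMod n) * (((u2⁻¹ : (ZMod n)ˣ) : ZMod n) * 2) := by ring
    _ = (w : ZMod n) := by rw [h, mul_one]

include hu2 in
lemma posn_one_iff (w : (ZMod n)ˣ) (c : ZMod n) :
    posn u2 w c = 1 ↔ c = ((w * u2⁻¹ : (ZMod n)ˣ) : ZMod n) := by
  unfold posn
  rw [Units.mul_inv_eq_one]
  constructor
  · intro h
    have h2 := oc_half_twice u2 hu2 w
    have : c + ((w * u2⁻¹ : (ZMod n)ˣ) : ZMod n) = (w : ZMod n) := h
    linear_combination this - h2
  · intro h
    rw [h]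
    exact oc_half_twice u2 hu2 w


/-- is `d` one of the special directions? -/
def isSpec (d : (ZMod n)ˣ) : Prop := ∃ j : ZMod p, j ≠ 0 ∧ t j = d

include ht2 in
lemma isSpec_neg {d : (ZMod n)ˣ} (h : isSpec t d) : isSpec t (-d) := by
  obtain ⟨j, hj, hjd⟩ := h
  exact ⟨-j, neg_ne_zero.2 hj, by rw [ht2 j hj, hjd]⟩

include ht2 in
lemma not_isSpec_neg {d : (ZMod n)ˣ} (h : ¬ isSpec t d) : ¬ isSpec t (-d) := by
  intro hc
  exact h (by simpa using isSpec_neg t ht2 hc)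

open Classical in
/-- The edge color of the edge from `a` to `a + d`. -/
noncomputable def ceAux (a : ZMod n) (d : (ZMod n)ˣ) : UCPal n :=
  if hs : isSpec t d then
    ucpat (Sum.inr true)
      (Sum.inl (t (if (choose hs).val % 2 = 1 then choose hs else -(choose hs))))
      (Sum.inl (t (-(if (choose hs).val % 2 = 1 then choose hs else -(choose hs)))))
      (kap hpn (if (choose hs).val % 2 = 1 then choose hs else -(choose hs))
           (if (choose hs).val % 2 = 1 then a else a + (d : ZMod n)))
  else
    ucpat (Sum.inr false)
      (Sum.inl (if ((d : ZMod n)).val % 2 = 1 then d else -d))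
      (Sum.inl (-(if ((d : ZMod n)).val % 2 = 1 then d else -d)))
      (posn u2 (if ((d : ZMod n)).val % 2 = 1 then d else -d)
           (if ((d : ZMod n)).val % 2 = 1 then a else a + (d : ZMod n)))

/-- The vertex color. -/
noncomputable def ovCv (a : ZMod n) : UCPal n :=
  if ZMod.castHom hpn (ZMod p) a = 0 then Sum.inr false
  else Sum.inl (t (ZMod.castHom hpn (ZMod p) a))

include ht1 hp2 in
open Classical in
lemma choose_spec_eq {d : (ZMod n)ˣ} (hs : isSpec t d) {j : ZMod p} (hj : j ≠ 0)
    (hjd : t j = d) : choose hs = j :=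
  oc_tinj hpn hp2 t ht1 (choose_spec hs).1 hj ((choose_spec hs).2.trans hjd.symm)

section Shapes

open Classical

include hn1 hno hp2 ht1 ht2 in
/-- Shape of a special edge color, seen from the vertex `u`, in terms of the canonical
(odd-val) representative `j₀` of the factor. -/
lemma ceAux_spec_shape (u : ZMod n) (d : (ZMod n)ˣ) (hs : isSpec t d) :
    ∃ j₀ : ZMod p, j₀ ≠ 0 ∧ j₀.val % 2 = 1 ∧
      ((d = t j₀ ∧ ceAux hpn t u2 u d =
          ucpat (Sum.inr true) (Sum.inl (t j₀)) (Sum.inl (t (-j₀))) (kap hpn j₀ u)) ∨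
       (d = t (-j₀) ∧ ceAux hpn t u2 u d =
          ucpat (Sum.inr true) (Sum.inl (t j₀)) (Sum.inl (t (-j₀))) (kap hpn j₀ u - 1))) := by
  obtain ⟨j, hj, hjd⟩ := hs
  have hcs : choose (⟨j, hj, hjd⟩ : isSpec t d) = j :=
    choose_spec_eq hpn hp2 t ht1 ⟨j, hj, hjd⟩ hj hjd
  rw [ceAux, dif_pos ⟨j, hj, hjd⟩, hcs]
  by_cases hpar : j.val % 2 = 1
  · refine ⟨j, hj, hpar, Or.inl ⟨hjd.symm, ?_⟩⟩
    simp only [if_pos hpar]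
  · have hj' : -j ≠ 0 := neg_ne_zero.2 hj
    have hparn : (-j).val % 2 = 1 := by
      have := oc_val_neg_parity (oc_hpo hp2) hj
      omega
    refine ⟨-j, hj', hparn, Or.inr ⟨by rw [neg_neg]; exact hjd.symm, ?_⟩⟩
    simp only [if_neg hpar]
    have hstep : (d : ZMod n) = -((t (-j) : (ZMod n)ˣ) : ZMod n) := by
      rw [ht2 j hj, ← hjd]
      simp
    have harg : u + (d : ZMod n) = (u - ((t (-j) : (ZMod n)ˣ) : ZMod n)) := by
      rw [hstep]; ring
    rw [harg]
    have hka := kap_add hpn hp2 t ht1 hj' (u - ((t (-j) : (ZMod n)ˣ) : ZMod n))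
    rw [show u - ((t (-j) : (ZMod n)ˣ) : ZMod n) + ((t (-j) : (ZMod n)ˣ) : ZMod n) = u
      by ring] at hka
    have harg2 : kap hpn (-j) (u - ((t (-j) : (ZMod n)ˣ) : ZMod n)) = kap hpn (-j) u - 1 := by
      rw [hka]; ring
    rw [harg2]


include hn1 hno in
lemma oc_neg_val_odd {d : (ZMod n)ˣ} (hpar : ¬ ((d : ZMod n)).val % 2 = 1) :
    (((-d : (ZMod n)ˣ) : ZMod n)).val % 2 = 1 := by
  haveI : Nontrivial (ZMod n) := Fintype.one_lt_card_iff_nontrivial.mp (by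
    rw [ZMod.card n]; exact hn1)
  have hd0 : (d : ZMod n) ≠ 0 := Units.ne_zero d
  have := oc_val_neg_parity hno hd0
  rw [show ((-d : (ZMod n)ˣ) : ZMod n) = -((d : (ZMod n)ˣ) : ZMod n) from Units.val_neg d]
  omega

include hn1 hno in
lemma oc_neg_val_even {d : (ZMod n)ˣ} (hpar : ((d : ZMod n)).val % 2 = 1) :
    ¬ (((-d : (ZMod n)ˣ) : ZMod n)).val % 2 = 1 := by
  haveI : Nontrivial (ZMod n) := Fintype.one_lt_card_iff_nontrivial.mp (by
    rw [ZMod.card n]; exact hn1)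
  have hd0 : (d : ZMod n) ≠ 0 := Units.ne_zero d
  have := oc_val_neg_parity hno hd0
  rw [show ((-d : (ZMod n)ˣ) : ZMod n) = -((d : (ZMod n)ˣ) : ZMod n) from Units.val_neg d]
  omega

include hn1 hno ht2 in
lemma ceAux_nonspec_shape (u : ZMod n) (d : (ZMod n)ˣ) (hs : ¬ isSpec t d) :
    ∃ w : (ZMod n)ˣ, ((w : ZMod n)).val % 2 = 1 ∧ ¬ isSpec t w ∧
      ((d = w ∧ ceAux hpn t u2 u d =
          ucpat (Sum.inr false) (Sum.inl w) (Sum.inl (-w)) (posn u2 w u)) ∨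
       (d = -w ∧ ceAux hpn t u2 u d =
          ucpat (Sum.inr false) (Sum.inl w) (Sum.inl (-w)) (posn u2 w u - 1))) := by
  rw [ceAux, dif_neg hs]
  by_cases hpar : ((d : ZMod n)).val % 2 = 1
  · refine ⟨d, hpar, hs, Or.inl ⟨rfl, ?_⟩⟩
    simp only [if_pos hpar]
  · have hparn := oc_neg_val_odd hn1 hno hpar
    have hsn : ¬ isSpec t (-d) := by
      intro hc
      exact hs (by simpa using isSpec_neg t ht2 hc)
    refine ⟨-d, hparn, hsn, Or.inr ⟨(neg_neg d).symm, ?_⟩⟩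
    simp only [if_neg hpar]
    have harg : u + ((d : (ZMod n)ˣ) : ZMod n) =
        u + (d : ZMod n) := rfl
    have hpp : posn u2 (-d) (u + (d : ZMod n)) = posn u2 (-d) u - 1 := by
      have hadd := posn_add u2 (-d) (u + (d : ZMod n))
      rw [show u + (d : ZMod n) + ((-d : (ZMod n)ˣ) : ZMod n) = u by
        rw [Units.val_neg]; ring] at hadd
      rw [hadd]; ring
    rw [hpp]

include hn1 hno hp2 ht1 ht2 in
lemma ceAux_symm (a : ZMod n) (d : (ZMod n)ˣ) :
    ceAux hpn t u2 a d = ceAux hpn t u2 (a + (d : ZMod n)) (-d) := by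
  have hvneg : ((-d : (ZMod n)ˣ) : ZMod n) = -((d : (ZMod n)ˣ) : ZMod n) := Units.val_neg d
  by_cases hs : isSpec t d
  · have hs' : isSpec t (-d) := isSpec_neg t ht2 hs
    obtain ⟨j, hj, hjd⟩ := hs
    have hjn : -j ≠ 0 := neg_ne_zero.2 hj
    rw [ceAux, ceAux, dif_pos (show isSpec t d from ⟨j, hj, hjd⟩), dif_pos hs']
    have hc1 : Classical.choose (⟨j, hj, hjd⟩ : isSpec t d) = j :=
      choose_spec_eq hpn hp2 t ht1 _ hj hjd
    have hc2 : Classical.choose hs' = -j :=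
      choose_spec_eq hpn hp2 t ht1 hs' hjn (by rw [ht2 j hj, hjd])
    rw [hc1, hc2]
    by_cases hpar : j.val % 2 = 1
    · have hparn : ¬ (-j).val % 2 = 1 := by
        have := oc_val_neg_parity (oc_hpo hp2) hj
        omega
      simp only [if_pos hpar, if_neg hparn, neg_neg]
      rw [show a + (d : ZMod n) + ((-d : (ZMod n)ˣ) : ZMod n) = a by rw [hvneg]; ring]
    · have hparn : (-j).val % 2 = 1 := by
        have := oc_val_neg_parity (oc_hpo hp2) hj
        omega
      simp only [if_neg hpar, if_pos hparn]
  · have hs' : ¬ isSpec t (-d) := not_isSpec_neg t ht2 hs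
    rw [ceAux, ceAux, dif_neg hs, dif_neg hs']
    by_cases hpar : ((d : ZMod n)).val % 2 = 1
    · have hparn := oc_neg_val_even hn1 hno hpar
      simp only [if_pos hpar, if_neg hparn, neg_neg]
      rw [show a + (d : ZMod n) + ((-d : (ZMod n)ˣ) : ZMod n) = a by rw [hvneg]; ring]
    · have hparn := oc_neg_val_odd hn1 hno hpar
      simp only [if_neg hpar, if_pos hparn]

end Shapes

section Distinct

lemma oc_odd_reps {q : ℕ} [NeZero q] (hq : Odd q) {j l : ZMod q}
    (hjp : j.val % 2 = 1) (hlp : l.val % 2 = 1) : j ≠ -l := by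
  intro h
  have hl0 : l ≠ 0 := by
    intro h0
    rw [h0] at hlp
    simp [ZMod.val_zero] at hlp
  have := oc_val_neg_parity hq hl0
  rw [h] at hjp
  omega

include hno in
lemma oc_units_odd_reps {w w' : (ZMod n)ˣ} (hw : ((w : ZMod n)).val % 2 = 1)
    (hw' : ((w' : ZMod n)).val % 2 = 1) : w ≠ -w' := by
  intro h
  have hc : (w : ZMod n) = -((w' : (ZMod n)ˣ) : ZMod n) := by
    rw [h]; exact Units.val_neg w'
  exact oc_odd_reps hno hw hw' hc

include hn1 hno ht2 in
lemma oc_unit_ne_neg (w : (ZMod n)ˣ) : w ≠ -w := by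
  intro h
  have hc : (w : ZMod n) = -((w : (ZMod n)ˣ) : ZMod n) := by
    simpa using congrArg Units.val h
  have h2 : (2 : ZMod n) * (w : ZMod n) = 0 := by linear_combination hc
  exact oc_h2n hn1 hno (((Units.isUnit w).mul_left_eq_zero).1 h2)

include hn1 hno hp2 ht1 ht2 in
lemma oc_tspec_ne {j₀ : ZMod p} (hj₀ : j₀ ≠ 0) (hpj₀ : j₀.val % 2 = 1) :
    Sum.inl (t j₀) ≠ (Sum.inl (t (-j₀)) : UCPal n) := by
  intro h
  exact oc_t_ne_neg hn1 hno t ht2 hj₀ (Sum.inl_injective h)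

end Distinct

section Constraints

open Classical

include hpn hp2 ht1 in
/-- Helper: colors of edges in two distinct special factors at the same vertex differ. -/
lemma oc_cross_spec (u : ZMod n) {j₀ l₀ : ZMod p} (hj₀ : j₀ ≠ 0) (hl₀ : l₀ ≠ 0)
    (hpj₀ : j₀.val % 2 = 1) (hpl₀ : l₀.val % 2 = 1) (hjl : j₀ ≠ l₀)
    {Kd Ke : ZMod p}
    (hKd : Kd = kap hpn j₀ u ∨ Kd = kap hpn j₀ u - 1)
    (hKe : Ke = kap hpn l₀ u ∨ Ke = kap hpn l₀ u - 1) :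
    ucpat (Sum.inr true) (Sum.inl (t j₀)) (Sum.inl (t (-j₀))) Kd ≠
    ucpat (Sum.inr true) (Sum.inl (t l₀)) (Sum.inl (t (-l₀))) Ke := by
  have hjnl : j₀ ≠ -l₀ := oc_odd_reps (oc_hpo hp2) hpj₀ hpl₀
  have hlnj : l₀ ≠ -j₀ := oc_odd_reps (oc_hpo hp2) hpl₀ hpj₀
  have hjn : -j₀ ≠ 0 := neg_ne_zero.2 hj₀
  have hln : -l₀ ≠ 0 := neg_ne_zero.2 hl₀
  intro h
  rcases ucpat_mem Kd with hd | hd | hd <;> rcases ucpat_mem Ke with he | he | he <;>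
    rw [hd, he] at h
  · -- X–X
    have h0d := ucpat_eq_cX (by simp) (by simp) hd
    have h0e := ucpat_eq_cX (by simp) (by simp) he
    have hud : ZMod.castHom hpn (ZMod p) u = j₀ ∨ ZMod.castHom hpn (ZMod p) u = -j₀ := by
      rcases hKd with h1 | h1
      · left; exact (kap_zero_iff hpn hp2 hj₀ u).1 (by rw [← h1, h0d])
      · right
        refine (kap_one_iff hpn hp2 hj₀ u).1 ?_
        have h2 : kap hpn j₀ u - 1 = 0 := by rw [← h1, h0d]
        linear_combination h2
    have hue : ZMod.castHom hpn (ZMod p) u = l₀ ∨ ZMod.castHom hpn (ZMod p) u = -l₀ := by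
      rcases hKe with h1 | h1
      · left; exact (kap_zero_iff hpn hp2 hl₀ u).1 (by rw [← h1, h0e])
      · right
        refine (kap_one_iff hpn hp2 hl₀ u).1 ?_
        have h2 : kap hpn l₀ u - 1 = 0 := by rw [← h1, h0e]
        linear_combination h2
    rcases hud with h1 | h1 <;> rcases hue with h2 | h2
    · exact hjl (by rw [← h1, h2])
    · exact hjnl (by rw [← h1, h2])
    · exact hlnj (by rw [← h2, h1])
    · exact hjl (neg_injective (by rw [← h1, h2]))
  · simp at h
  · simp at h
  · simp at h
  · exact hjl (oc_tinj hpn hp2 t ht1 hj₀ hl₀ (Sum.inl_injective h))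
  · exact hjnl (oc_tinj hpn hp2 t ht1 hj₀ hln (Sum.inl_injective h))
  · simp at h
  · exact hlnj ((oc_tinj hpn hp2 t ht1 hjn hl₀ (Sum.inl_injective h)).symm)
  · exact hjl (neg_injective (oc_tinj hpn hp2 t ht1 hjn hln (Sum.inl_injective h)))

include hn1 hno hu2 in
/-- Helper: colors of edges in two distinct nonspecial factors at the same vertex differ. -/
lemma oc_cross_nonspec (u : ZMod n) {w w' : (ZMod n)ˣ}
    (hpw : ((w : ZMod n)).val % 2 = 1) (hpw' : ((w' : ZMod n)).val % 2 = 1)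
    (hww' : w ≠ w') {Kd Ke : ZMod n}
    (hKd : Kd = posn u2 w u ∨ Kd = posn u2 w u - 1)
    (hKe : Ke = posn u2 w' u ∨ Ke = posn u2 w' u - 1) :
    ucpat (Sum.inr false) (Sum.inl w) (Sum.inl (-w)) Kd ≠
    ucpat (Sum.inr false) (Sum.inl w') (Sum.inl (-w')) Ke := by
  have hwnw : w ≠ -w' := oc_units_odd_reps hno hpw hpw'
  have hwnw' : w' ≠ -w := oc_units_odd_reps hno hpw' hpw
  intro h
  rcases ucpat_mem Kd with hd | hd | hd <;> rcases ucpat_mem Ke with he | he | he <;>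
    rw [hd, he] at h
  · -- Y–Y
    have h0d := ucpat_eq_cX (by simp) (by simp) hd
    have h0e := ucpat_eq_cX (by simp) (by simp) he
    have hud : u = -((w * u2⁻¹ : (ZMod n)ˣ) : ZMod n) ∨
        u = ((w * u2⁻¹ : (ZMod n)ˣ) : ZMod n) := by
      rcases hKd with h1 | h1
      · left; exact (posn_zero_iff u2 w u).1 (by rw [← h1, h0d])
      · right
        refine (posn_one_iff u2 hu2 w u).1 ?_
        have h2 : posn u2 w u - 1 = 0 := by rw [← h1, h0d]
        linear_combination h2
    have hue : u = -((w' * u2⁻¹ : (ZMod n)ˣ) : ZMod n) ∨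
        u = ((w' * u2⁻¹ : (ZMod n)ˣ) : ZMod n) := by
      rcases hKe with h1 | h1
      · left; exact (posn_zero_iff u2 w' u).1 (by rw [← h1, h0e])
      · right
        refine (posn_one_iff u2 hu2 w' u).1 ?_
        have h2 : posn u2 w' u - 1 = 0 := by rw [← h1, h0e]
        linear_combination h2
    have hcoe : (w : ZMod n) = (w' : ZMod n) ∨ (w : ZMod n) = -((w' : (ZMod n)ˣ) : ZMod n) := by
      have hu2inv : ((u2⁻¹ : (ZMod n)ˣ) : ZMod n) * (u2 : ZMod n) = 1 := Units.inv_mul u2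
      rcases hud with h1 | h1 <;> rcases hue with h2 | h2
      · left
        have h3 : -((w * u2⁻¹ : (ZMod n)ˣ) : ZMod n) = -((w' * u2⁻¹ : (ZMod n)ˣ) : ZMod n) := by
          rw [← h1, h2]
        have h4 := congrArg (fun x => x * (u2 : ZMod n)) h3
        simp only [Units.val_mul, mul_assoc, hu2inv, mul_one, neg_mul] at h4
        linear_combination -h4
      · right
        have h3 : -((w * u2⁻¹ : (ZMod n)ˣ) : ZMod n) = ((w' * u2⁻¹ : (ZMod n)ˣ) : ZMod n) := by
          rw [← h1, h2]
        have h4 := congrArg (fun x => x * (u2 : ZMod n)) h3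
        simp only [Units.val_mul, mul_assoc, hu2inv, mul_one, neg_mul] at h4
        linear_combination -h4
      · right
        have h3 : ((w * u2⁻¹ : (ZMod n)ˣ) : ZMod n) = -((w' * u2⁻¹ : (ZMod n)ˣ) : ZMod n) := by
          rw [← h1, h2]
        have h4 := congrArg (fun x => x * (u2 : ZMod n)) h3
        simp only [Units.val_mul, mul_assoc, hu2inv, mul_one, neg_mul] at h4
        linear_combination h4
      · left
        have h3 : ((w * u2⁻¹ : (ZMod n)ˣ) : ZMod n) = ((w' * u2⁻¹ : (ZMod n)ˣ) : ZMod n) := by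
          rw [← h1, h2]
        have h4 := congrArg (fun x => x * (u2 : ZMod n)) h3
        simp only [Units.val_mul, mul_assoc, hu2inv, mul_one] at h4
        linear_combination h4
    rcases hcoe with h1 | h1
    · exact hww' (Units.ext h1)
    · exact hwnw (Units.ext (by rw [h1, Units.val_neg]))
  · simp at h
  · simp at h
  · simp at h
  · exact hww' (Sum.inl_injective h)
  · exact hwnw (Sum.inl_injective h)
  · simp at h
  · exact hwnw' ((Sum.inl_injective h).symm)
  · exact hww' (neg_injective (Sum.inl_injective h))

include ht2 in
/-- Helper: a special edge color never equals a nonspecial edge color. -/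
lemma oc_cross_mixed {j₀ : ZMod p} (hj₀ : j₀ ≠ 0) {w : (ZMod n)ˣ} (hwns : ¬ isSpec t w)
    {Kd : ZMod p} {Ke : ZMod n} :
    ucpat (Sum.inr true) (Sum.inl (t j₀)) (Sum.inl (t (-j₀))) Kd ≠
    ucpat (Sum.inr false) (Sum.inl w) (Sum.inl (-w)) Ke := by
  have hwns' : ¬ isSpec t (-w) := not_isSpec_neg t ht2 hwns
  have hjn : -j₀ ≠ 0 := neg_ne_zero.2 hj₀
  intro h
  rcases ucpat_mem Kd with hd | hd | hd <;> rcases ucpat_mem Ke with he | he | he <;>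
    rw [hd, he] at h
  · simp at h
  · simp at h
  · simp at h
  · simp at h
  · exact hwns ⟨j₀, hj₀, Sum.inl_injective h⟩
  · exact hwns' ⟨j₀, hj₀, Sum.inl_injective h⟩
  · simp at h
  · exact hwns ⟨-j₀, hjn, Sum.inl_injective h⟩
  · exact hwns' ⟨-j₀, hjn, Sum.inl_injective h⟩


include hn1 hno hpn hp2 ht1 ht2 hu2 in
/-- Edge-properness: two distinct edges at the same vertex get distinct colors. -/
lemma oc_edge_proper (u : ZMod n) (d e : (ZMod n)ˣ) (hde : d ≠ e) :
    ceAux hpn t u2 u d ≠ ceAux hpn t u2 u e := by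
  have hp1 := oc_hp1 (p := p)
  have hpo := oc_hpo (p := p) hp2
  by_cases hsd : isSpec t d <;> by_cases hse : isSpec t e
  · obtain ⟨j₀, hj₀, hpj₀, hD⟩ := ceAux_spec_shape hn1 hno hpn hp2 t ht1 ht2 u2 u d hsd
    obtain ⟨l₀, hl₀, hpl₀, hE⟩ := ceAux_spec_shape hn1 hno hpn hp2 t ht1 ht2 u2 u e hse
    by_cases hjl : j₀ = l₀
    · subst hjl
      have hX1 : (Sum.inr true : UCPal n) ≠ Sum.inl (t j₀) := by simp
      have hX2 : (Sum.inr true : UCPal n) ≠ Sum.inl (t (-j₀)) := by simp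
      have h12 : (Sum.inl (t j₀) : UCPal n) ≠ Sum.inl (t (-j₀)) :=
        oc_tspec_ne hn1 hno hpn hp2 t ht1 ht2 hj₀ hpj₀
      rcases hD with ⟨hd1, hcd⟩ | ⟨hd1, hcd⟩ <;> rcases hE with ⟨he1, hce⟩ | ⟨he1, hce⟩
      · exact absurd (hd1.trans he1.symm) hde
      · rw [hcd, hce]
        exact (ucpat_adj hp1 hpo hX1 hX2 h12 (kap hpn j₀ u)).symm
      · rw [hcd, hce]
        exact ucpat_adj hp1 hpo hX1 hX2 h12 (kap hpn j₀ u)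
      · exact absurd (hd1.trans he1.symm) hde
    · rcases hD with ⟨hd1, hcd⟩ | ⟨hd1, hcd⟩ <;> rcases hE with ⟨he1, hce⟩ | ⟨he1, hce⟩ <;>
        rw [hcd, hce]
      · exact oc_cross_spec hpn hp2 t ht1 u hj₀ hl₀ hpj₀ hpl₀ hjl (Or.inl rfl) (Or.inl rfl)
      · exact oc_cross_spec hpn hp2 t ht1 u hj₀ hl₀ hpj₀ hpl₀ hjl (Or.inl rfl) (Or.inr rfl)
      · exact oc_cross_spec hpn hp2 t ht1 u hj₀ hl₀ hpj₀ hpl₀ hjl (Or.inr rfl) (Or.inl rfl)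
      · exact oc_cross_spec hpn hp2 t ht1 u hj₀ hl₀ hpj₀ hpl₀ hjl (Or.inr rfl) (Or.inr rfl)
  · obtain ⟨j₀, hj₀, hpj₀, hD⟩ := ceAux_spec_shape hn1 hno hpn hp2 t ht1 ht2 u2 u d hsd
    obtain ⟨w, hpw, hwns, hE⟩ := ceAux_nonspec_shape hn1 hno hpn t ht2 u2 u e hse
    rcases hD with ⟨-, hcd⟩ | ⟨-, hcd⟩ <;> rcases hE with ⟨-, hce⟩ | ⟨-, hce⟩ <;>
      rw [hcd, hce] <;>
      exact oc_cross_mixed t ht2 hj₀ hwns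
  · obtain ⟨w, hpw, hwns, hD⟩ := ceAux_nonspec_shape hn1 hno hpn t ht2 u2 u d hsd
    obtain ⟨j₀, hj₀, hpj₀, hE⟩ := ceAux_spec_shape hn1 hno hpn hp2 t ht1 ht2 u2 u e hse
    rcases hD with ⟨-, hcd⟩ | ⟨-, hcd⟩ <;> rcases hE with ⟨-, hce⟩ | ⟨-, hce⟩ <;>
      rw [hcd, hce] <;>
      exact (oc_cross_mixed t ht2 hj₀ hwns).symm
  · obtain ⟨w, hpw, hwns, hD⟩ := ceAux_nonspec_shape hn1 hno hpn t ht2 u2 u d hsd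
    obtain ⟨w', hpw', hwns', hE⟩ := ceAux_nonspec_shape hn1 hno hpn t ht2 u2 u e hse
    by_cases hww' : w = w'
    · subst hww'
      have hX1 : (Sum.inr false : UCPal n) ≠ Sum.inl w := by simp
      have hX2 : (Sum.inr false : UCPal n) ≠ Sum.inl (-w) := by simp
      have h12 : (Sum.inl w : UCPal n) ≠ Sum.inl (-w) := by
        intro hc
        exact oc_unit_ne_neg hn1 hno t ht2 w (Sum.inl_injective hc)
      have hn3 : Odd n := hno
      rcases hD with ⟨hd1, hcd⟩ | ⟨hd1, hcd⟩ <;> rcases hE with ⟨he1, hce⟩ | ⟨he1, hce⟩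
      · exact absurd (hd1.trans he1.symm) hde
      · rw [hcd, hce]
        exact (ucpat_adj hn1 hn3 hX1 hX2 h12 (posn u2 w u)).symm
      · rw [hcd, hce]
        exact ucpat_adj hn1 hn3 hX1 hX2 h12 (posn u2 w u)
      · exact absurd (hd1.trans he1.symm) hde
    · rcases hD with ⟨hd1, hcd⟩ | ⟨hd1, hcd⟩ <;> rcases hE with ⟨he1, hce⟩ | ⟨he1, hce⟩ <;>
        rw [hcd, hce]
      · exact oc_cross_nonspec hn1 hno u2 hu2 u hpw hpw' hww' (Or.inl rfl) (Or.inl rfl)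
      · exact oc_cross_nonspec hn1 hno u2 hu2 u hpw hpw' hww' (Or.inl rfl) (Or.inr rfl)
      · exact oc_cross_nonspec hn1 hno u2 hu2 u hpw hpw' hww' (Or.inr rfl) (Or.inl rfl)
      · exact oc_cross_nonspec hn1 hno u2 hu2 u hpw hpw' hww' (Or.inr rfl) (Or.inr rfl)

include hn1 hno hpn hp2 ht1 ht2 in
/-- A special edge's color differs from the vertex color of any endpoint. -/
lemma oc_spec_endpoint (x : ZMod n) {j₀ : ZMod p} (hj₀ : j₀ ≠ 0) (hpj₀ : j₀.val % 2 = 1)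
    {K : ZMod p} (hx : kap hpn j₀ x = K ∨ kap hpn j₀ x = K + 1) :
    ucpat (Sum.inr true) (Sum.inl (t j₀)) (Sum.inl (t (-j₀))) K ≠ ovCv hpn t x := by
  have hp1 := oc_hp1 (p := p)
  have hpo := oc_hpo (p := p) hp2
  have hX1 : (Sum.inr true : UCPal n) ≠ Sum.inl (t j₀) := by simp
  have hX2 : (Sum.inr true : UCPal n) ≠ Sum.inl (t (-j₀)) := by simp
  have h12 : (Sum.inl (t j₀) : UCPal n) ≠ Sum.inl (t (-j₀)) :=
    oc_tspec_ne hn1 hno hpn hp2 t ht1 ht2 hj₀ hpj₀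
  intro h
  rcases ucpat_mem K with hm | hm | hm <;> rw [hm] at h
  · unfold ovCv at h
    by_cases hπ : ZMod.castHom hpn (ZMod p) x = 0
    · rw [if_pos hπ] at h; exact absurd h (by simp)
    · rw [if_neg hπ] at h; exact absurd h (by simp)
  · have hK := ucpat_eq_c1 hp1 hpo hX1 h12 hm
    unfold ovCv at h
    by_cases hπ : ZMod.castHom hpn (ZMod p) x = 0
    · rw [if_pos hπ] at h; exact absurd h (by simp)
    · rw [if_neg hπ] at h
      have hjx : j₀ = ZMod.castHom hpn (ZMod p) x :=
          oc_tinj hpn hp2 t ht1 hj₀ hπ (Sum.inl_injective h)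
      have h0 : kap hpn j₀ x = 0 := (kap_zero_iff hpn hp2 hj₀ x).2 hjx.symm
      rcases hx with h1 | h1
      · exact hK.1 (by rw [← h1, h0])
      · exact hK.2 (by linear_combination h0 - h1)
  · have hK := ucpat_eq_c2 hp1 hX2 h12 hm
    unfold ovCv at h
    by_cases hπ : ZMod.castHom hpn (ZMod p) x = 0
    · rw [if_pos hπ] at h; exact absurd h (by simp)
    · rw [if_neg hπ] at h
      have hjn : -j₀ ≠ 0 := neg_ne_zero.2 hj₀
      have hjx : -j₀ = ZMod.castHom hpn (ZMod p) x :=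
        oc_tinj hpn hp2 t ht1 hjn hπ (Sum.inl_injective h)
      have h0 : kap hpn j₀ x = 1 := (kap_one_iff hpn hp2 hj₀ x).2 hjx.symm
      rcases hx with h1 | h1
      · exact hK.2 (by rw [← h1, h0])
      · exact hK.1 (by linear_combination h0 - h1)

include hn1 hno hpn ht2 hu2 in
/-- A nonspecial edge's color differs from the vertex color of any endpoint. -/
lemma oc_nonspec_endpoint (x : ZMod n) {w : (ZMod n)ˣ} (hwns : ¬ isSpec t w)
    {K : ZMod n} (hx : posn u2 w x = K ∨ posn u2 w x = K + 1) :
    ucpat (Sum.inr false) (Sum.inl w) (Sum.inl (-w)) K ≠ ovCv hpn t x := by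
  intro h
  rcases ucpat_mem K with hm | hm | hm <;> rw [hm] at h
  · have hK0 : K = 0 := ucpat_eq_cX (by simp) (by simp) hm
    have hπx : ZMod.castHom hpn (ZMod p) x ≠ 0 := by
      rcases hx with h1 | h1
      · have hx0 : posn u2 w x = 0 := by rw [h1, hK0]
        have hxe := (posn_zero_iff u2 w x).1 hx0
        rw [hxe, map_neg]
        exact neg_ne_zero.2 (oc_pi_unit hpn (w * u2⁻¹))
      · have hx1 : posn u2 w x = 1 := by rw [h1, hK0]; ring
        have hxe := (posn_one_iff u2 hu2 w x).1 hx1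
        rw [hxe]
        exact oc_pi_unit hpn (w * u2⁻¹)
    unfold ovCv at h
    rw [if_neg hπx] at h
    simp at h
  · unfold ovCv at h
    by_cases hπ : ZMod.castHom hpn (ZMod p) x = 0
    · rw [if_pos hπ] at h; exact absurd h (by simp)
    · rw [if_neg hπ] at h
      exact hwns ⟨_, hπ, (Sum.inl_injective h).symm⟩
  · unfold ovCv at h
    by_cases hπ : ZMod.castHom hpn (ZMod p) x = 0
    · rw [if_pos hπ] at h; exact absurd h (by simp)
    · rw [if_neg hπ] at h
      exact (not_isSpec_neg t ht2 hwns) ⟨_, hπ, (Sum.inl_injective h).symm⟩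

include hpn hp2 ht1 in
lemma oc_cv_proper (u v : ZMod n) (d : (ZMod n)ˣ) (hd : (d : ZMod n) = v - u) :
    ovCv hpn t u ≠ ovCv hpn t v := by
  have hπd : ZMod.castHom hpn (ZMod p) (d : ZMod n) ≠ 0 := oc_pi_unit hpn d
  have hrel : ZMod.castHom hpn (ZMod p) v = ZMod.castHom hpn (ZMod p) u +
      ZMod.castHom hpn (ZMod p) (d : ZMod n) := by
    rw [hd, map_sub]; ring
  unfold ovCv
  split_ifs with h1 h2 h2
  · exfalso
    rw [h1, h2] at hrel
    exact hπd (by linear_combination -hrel)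
  · simp
  · simp
  · intro h
    have huv := oc_tinj hpn hp2 t ht1 h1 h2 (Sum.inl_injective h)
    rw [huv] at hrel
    exact hπd (by linear_combination -hrel)

include hn1 hno hpn hp2 ht1 ht2 hu2 in
/-- An edge's color differs from the vertex colors of both endpoints. -/
lemma oc_edge_vertex (u v : ZMod n) (d : (ZMod n)ˣ) (hd : (d : ZMod n) = v - u) :
    ceAux hpn t u2 u d ≠ ovCv hpn t u ∧ ceAux hpn t u2 u d ≠ ovCv hpn t v := by
  have hv : v = u + (d : ZMod n) := by rw [hd]; ring
  by_cases hs : isSpec t d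
  · obtain ⟨j₀, hj₀, hpj₀, hD⟩ := ceAux_spec_shape hn1 hno hpn hp2 t ht1 ht2 u2 u d hs
    rcases hD with ⟨hd1, hcd⟩ | ⟨hd1, hcd⟩
    · rw [hcd]
      have hkv : kap hpn j₀ v = kap hpn j₀ u + 1 := by
        rw [hv, show (d : ZMod n) = ((t j₀ : (ZMod n)ˣ) : ZMod n) by rw [hd1]]
        exact kap_add hpn hp2 t ht1 hj₀ u
      exact ⟨oc_spec_endpoint hn1 hno hpn hp2 t ht1 ht2 u hj₀ hpj₀ (Or.inl rfl),
        oc_spec_endpoint hn1 hno hpn hp2 t ht1 ht2 v hj₀ hpj₀ (Or.inr hkv)⟩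
    · rw [hcd]
      have hstep : (d : ZMod n) = -((t j₀ : (ZMod n)ˣ) : ZMod n) := by
        rw [hd1, ht2 j₀ hj₀]
        simp
      have hvu : v + ((t j₀ : (ZMod n)ˣ) : ZMod n) = u := by rw [hv, hstep]; ring
      have h2 := kap_add hpn hp2 t ht1 hj₀ v
      rw [hvu] at h2
      have hkv : kap hpn j₀ v = kap hpn j₀ u - 1 := by linear_combination -h2
      refine ⟨oc_spec_endpoint hn1 hno hpn hp2 t ht1 ht2 u hj₀ hpj₀ (Or.inr (by ring)),
        oc_spec_endpoint hn1 hno hpn hp2 t ht1 ht2 v hj₀ hpj₀ (Or.inl hkv)⟩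
  · obtain ⟨w, hpw, hwns, hD⟩ := ceAux_nonspec_shape hn1 hno hpn t ht2 u2 u d hs
    rcases hD with ⟨hd1, hcd⟩ | ⟨hd1, hcd⟩
    · rw [hcd]
      have hkv : posn u2 w v = posn u2 w u + 1 := by
        rw [hv, show (d : ZMod n) = ((w : (ZMod n)ˣ) : ZMod n) by rw [hd1]]
        exact posn_add u2 w u
      exact ⟨oc_nonspec_endpoint hn1 hno hpn t ht2 u2 hu2 u hwns (Or.inl rfl),
        oc_nonspec_endpoint hn1 hno hpn t ht2 u2 hu2 v hwns (Or.inr hkv)⟩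
    · rw [hcd]
      have hstep : (d : ZMod n) = -((w : (ZMod n)ˣ) : ZMod n) := by
        rw [hd1]
        exact Units.val_neg w
      have hvu : v + ((w : (ZMod n)ˣ) : ZMod n) = u := by rw [hv, hstep]; ring
      have h2 := posn_add u2 w v
      rw [hvu] at h2
      have hkv : posn u2 w v = posn u2 w u - 1 := by linear_combination -h2
      exact ⟨oc_nonspec_endpoint hn1 hno hpn t ht2 u2 hu2 u hwns (Or.inr (by ring)),
        oc_nonspec_endpoint hn1 hno hpn t ht2 u2 hu2 v hwns (Or.inl hkv)⟩

end Constraints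

end OddCase

section Assembly

open Classical

lemma odd_totalColorable (n : ℕ) (hn1 : 1 < n) (hno : Odd n) :
    TotalColorable (unitaryCayleyGraph n) (Nat.totient n + 2) := by
  haveI : NeZero n := ⟨by omega⟩
  have hppr : n.minFac.Prime := Nat.minFac_prime (by omega)
  haveI : Fact (n.minFac.Prime) := ⟨hppr⟩
  set p := n.minFac with hpdef
  have hpn : p ∣ n := Nat.minFac_dvd n
  have hp2 : p ≠ 2 := by
    intro h
    have h2 : (2 : ℕ) ∣ n := h ▸ hpn
    rcases hno with ⟨m, hm⟩
    omega
  -- the unit 2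
  have hu2' : IsUnit (2 : ZMod n) := by
    rw [show (2 : ZMod n) = ((2 : ℕ) : ZMod n) by push_cast; ring,
      ZMod.isUnit_iff_coprime]
    refine (Nat.prime_two.coprime_iff_not_dvd).2 ?_
    rcases hno with ⟨m, hm⟩
    omega
  obtain ⟨u2, hu2⟩ := hu2'
  -- lifting units of ZMod p to units of ZMod n
  have hsurj := ZMod.unitsMap_surjective (n := p) hpn
  choose g hg using hsurj
  have hgval : ∀ c : (ZMod p)ˣ, ZMod.castHom hpn (ZMod p) ((g c : (ZMod n)ˣ) : ZMod n)
      = (c : ZMod p) := by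
    intro c
    have := hg c
    have h2 := congrArg (Units.val) this
    rwa [ZMod.unitsMap_def] at h2
  have hm2 : ∀ j : ZMod p, j ≠ 0 → (-2 * j : ZMod p) ≠ 0 := by
    intro j hj h
    rcases mul_eq_zero.1 h with h' | h'
    · have : (2 : ZMod p) = 0 := by linear_combination -h'
      exact oc_h2p hp2 this
    · exact hj h'
  let f : ZMod p → (ZMod n)ˣ := fun j =>
    if h : (-2 * j : ZMod p) ≠ 0 then g (Units.mk0 _ h) else 1
  have hf : ∀ j : ZMod p, j ≠ 0 →
      ZMod.castHom hpn (ZMod p) ((f j : (ZMod n)ˣ) : ZMod n) = -2 * j := by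
    intro j hj
    have h := hm2 j hj
    simp only [f, dif_pos h]
    rw [hgval]
    rfl
  let t : ZMod p → (ZMod n)ˣ := fun j => if j.val % 2 = 1 then f j else -(f (-j))
  have hpo : Odd p := hppr.odd_of_ne_two hp2
  have ht1 : ∀ j : ZMod p, j ≠ 0 →
      ZMod.castHom hpn (ZMod p) ((t j : (ZMod n)ˣ) : ZMod n) = -2 * j := by
    intro j hj
    by_cases hpar : j.val % 2 = 1
    · simp only [t, if_pos hpar]
      exact hf j hj
    · simp only [t, if_neg hpar]
      rw [Units.val_neg, map_neg, hf (-j) (neg_ne_zero.2 hj)]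
      ring
  have ht2 : ∀ j : ZMod p, j ≠ 0 → t (-j) = -(t j) := by
    intro j hj
    have hps := oc_val_neg_parity hpo hj
    by_cases hpar : j.val % 2 = 1
    · have hparn : ¬ (-j).val % 2 = 1 := by omega
      simp only [t, if_pos hpar, if_neg hparn, neg_neg]
    · have hparn : (-j).val % 2 = 1 := by omega
      simp only [t, if_neg hpar, if_pos hparn, neg_neg]
  -- the coloring
  obtain ⟨F, hF⟩ := ucpal_emb n
  refine totalColorable_of_inj _ _ F hF (ovCv hpn t)
    (fun a b => if h : IsUnit (b - a) then ceAux hpn t u2 a h.unit else Sum.inr false)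
    ?_ ?_ ?_ ?_
  · -- vertex proper
    intro u v h
    have hd : IsUnit (v - u) := by simpa [neg_sub] using h.2.neg
    exact oc_cv_proper hpn hp2 t ht1 u v hd.unit hd.unit_spec
  · -- symmetry
    intro u v h
    have hd : IsUnit (v - u) := by simpa [neg_sub] using h.2.neg
    have hd' : IsUnit (u - v) := h.2
    simp only [dif_pos hd, dif_pos hd']
    have hsym := ceAux_symm hn1 hno hpn hp2 t ht1 ht2 u2 u hd.unit
    have h1 : u + ((hd.unit : (ZMod n)ˣ) : ZMod n) = v := by
      rw [hd.unit_spec]; ring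
    have h2 : -hd.unit = hd'.unit := by
      ext
      rw [Units.val_neg, hd.unit_spec, hd'.unit_spec]
      ring
    rw [h1, h2] at hsym
    exact hsym
  · -- edge proper
    intro u v w h1 h2 hvw
    have hd : IsUnit (v - u) := by simpa [neg_sub] using h1.2.neg
    have he : IsUnit (w - u) := by simpa [neg_sub] using h2.2.neg
    simp only [dif_pos hd, dif_pos he]
    have hde : hd.unit ≠ he.unit := by
      intro hc
      apply hvw
      have := congrArg (Units.val) hc
      rw [hd.unit_spec, he.unit_spec] at this
      linear_combination this
    exact oc_edge_proper hn1 hno hpn hp2 t ht1 ht2 u2 hu2 u hd.unit he.unit hde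
  · -- edge vs endpoints
    intro u v h
    have hd : IsUnit (v - u) := by simpa [neg_sub] using h.2.neg
    simp only [dif_pos hd]
    exact oc_edge_vertex hn1 hno hpn hp2 t ht1 ht2 u2 hu2 u v hd.unit hd.unit_spec

lemma even_totalColorable (n : ℕ) (hn1 : 1 < n) (hne : Even n) :
    TotalColorable (unitaryCayleyGraph n) (Nat.totient n + 2) := by
  haveI : NeZero n := ⟨by omega⟩
  have he : (2 : ℕ) ∣ n := hne.two_dvd
  obtain ⟨F, hF⟩ := ucpal_emb n
  obtain ⟨e1, e2, e3, e4⟩ := ev_total (n := n) he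
  exact totalColorable_of_inj _ _ F hF (evCv he) (evCe he) e1 e2 e3 e4

end Assembly

/-- For every integer `n > 1`, the unitary Cayley graph `X_n` admits a proper
total coloring with `φ(n) + 2` colors (`X_n` is `φ(n)`-regular, so this is the
Total Coloring Conjecture for `X_n`). -/
theorem unitaryCayley_totalColorable (n : ℕ) (hn : 1 < n) :
    TotalColorable (unitaryCayleyGraph n) (Nat.totient n + 2) := by
  rcases Nat.even_or_odd n with h | h
  · exact even_totalColorable n hn h
  · exact odd_totalColorable n hn h
end

section
/- Every mock threshold graph G satisfies the Total Coloring Conjecture; that is, χ''(G) ≤ Δ(G) + 2. -/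
/-- A graph `G` on `n` vertices is mock threshold if there is a vertex ordering
`σ 0, σ 1, ..., σ (n-1)` such that for every `i`, the degree of `σ i` in the
subgraph induced by `{σ 0, ..., σ i}` is `0`, `1`, `i - 1`, or `i`
(0-indexed; i.e. `0`, `1`, `i - 2`, or `i - 1` with 1-indexed positions). -/
def MockThreshold {n : ℕ} (G : SimpleGraph (Fin n)) : Prop :=
  ∃ σ : Equiv.Perm (Fin n), ∀ i : Fin n,
    {j : Fin n | j < i ∧ G.Adj (σ i) (σ j)}.ncard = 0 ∨
    {j : Fin n | j < i ∧ G.Adj (σ i) (σ j)}.ncard = 1 ∨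
    {j : Fin n | j < i ∧ G.Adj (σ i) (σ j)}.ncard = (i : ℕ) - 1 ∨
    {j : Fin n | j < i ∧ G.Adj (σ i) (σ j)}.ncard = (i : ℕ)

lemma totalColorable_mono {V : Type*} (G : SimpleGraph V) {k k' : ℕ} (h : k ≤ k') :
    TotalColorable G k → TotalColorable G k' := by
  rintro ⟨cv, ce, h1, h2, h3, h4⟩
  refine ⟨fun v => Fin.castLE h (cv v), fun u v => Fin.castLE h (ce u v), ?_, ?_, ?_, ?_⟩
  · exact fun u v huv hne => h1 u v huv (Fin.castLE_injective h hne)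
  · exact fun u v huv => congrArg _ (h2 u v huv)
  · exact fun u v w huv huw hvw hne => h3 u v w huv huw hvw (Fin.castLE_injective h hne)
  · exact fun u v huv =>
      ⟨fun hne => ((h4 u v huv).1 (Fin.castLE_injective h hne)),
       fun hne => ((h4 u v huv).2 (Fin.castLE_injective h hne))⟩

/-- The "odd host" coloring: any graph on `Fin n` is totally colorable with `m`
colors whenever `m` is odd and `n ≤ m`, via `cv a = 2a`, `ce a b = a + b` in `ZMod m`. -/
lemma totalColorable_of_le_odd {n m : ℕ} (G : SimpleGraph (Fin n)) (hm : Odd m) (hnm : n ≤ m) :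
    TotalColorable G m := by
  have hm0 : NeZero m := ⟨by rintro rfl; simp [Nat.odd_iff] at hm⟩
  set ι : Fin n → ZMod m := fun a => ((a : ℕ) : ZMod m) with hι
  have hι_inj : Function.Injective ι := by
    intro a b hab
    have ha := ZMod.val_cast_of_lt (lt_of_lt_of_le a.isLt hnm)
    have hb := ZMod.val_cast_of_lt (lt_of_lt_of_le b.isLt hnm)
    apply Fin.ext
    rw [← ha, ← hb]
    simp only [hι] at hab
    rw [hab]
  have h2 : IsUnit (2 : ZMod m) := by
    have h22 : ((2:ℕ) : ZMod m) = (2 : ZMod m) := by norm_cast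
    rw [← h22, ZMod.isUnit_iff_coprime]
    exact Nat.coprime_two_left.mpr hm
  set ev : ZMod m → Fin m := fun z => ⟨z.val, ZMod.val_lt z⟩ with hev
  have ev_inj : Function.Injective ev := by
    intro a b hab
    exact ZMod.val_injective m (congrArg Fin.val hab)
  refine ⟨fun a => ev (2 * ι a), fun a b => ev (ι a + ι b), ?_, ?_, ?_, ?_⟩
  · intro u v huv hne
    exact huv.ne (hι_inj (h2.mul_right_injective (ev_inj hne)))
  · intro u v _
    show ev (ι u + ι v) = ev (ι v + ι u)
    rw [add_comm]
  · intro u v w _ _ hvw hne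
    exact hvw (hι_inj (add_left_cancel (ev_inj hne)))
  · intro u v huv
    constructor
    · intro hne
      have h' : ι u + ι v = ι u + ι u := by
        have := ev_inj hne; rwa [two_mul] at this
      exact huv.ne' (hι_inj (add_left_cancel h'))
    · intro hne
      have h' : ι u + ι v = ι v + ι v := by
        have := ev_inj hne; rwa [two_mul] at this
      exact huv.ne (hι_inj (add_right_cancel h'))

lemma exists_color {k : ℕ} (s : Finset (Fin k)) (h : s.card < k) : ∃ c, c ∉ s := by
  have hne : sᶜ.Nonempty := by
    apply Finset.card_pos.mp
    rw [Finset.card_compl]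
    simp only [Fintype.card_fin]
    omega
  obtain ⟨c, hc⟩ := hne
  exact ⟨c, Finset.mem_compl.mp hc⟩

lemma totalColorable_extend {n k : ℕ} (G : SimpleGraph (Fin (n+1))) [DecidableRel G.Adj]
    (hdeg : G.degree (Fin.last n) ≤ 1)
    (hk : ∀ v, G.degree v + 2 ≤ k)
    (h : TotalColorable (G.comap Fin.castSucc) k) :
    TotalColorable G k := by
  classical
  obtain ⟨cv', ce', p1, p2, p3, p4⟩ := h
  set w : Fin (n+1) := Fin.last n with hw
  have hk2 : 2 ≤ k := le_trans (by omega) (hk w)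
  have hadj' : ∀ (x y : Fin (n+1)) (hx : x ≠ w) (hy : y ≠ w), G.Adj x y →
      (G.comap Fin.castSucc).Adj (x.castPred hx) (y.castPred hy) := by
    intro x y hx hy hxy
    simpa [SimpleGraph.comap_adj, Fin.castSucc_castPred] using hxy
  by_cases hNbr : ∃ u, G.Adj w u
  · -- w has a (unique) neighbor u
    obtain ⟨u, hu⟩ := hNbr
    have huw : u ≠ w := fun e => G.irrefl (e ▸ hu)
    have huniq : ∀ x, G.Adj w x → x = u := by
      intro x hx
      have hmx : x ∈ G.neighborFinset w := (SimpleGraph.mem_neighborFinset _ _ _).mpr hx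
      have hmu : u ∈ G.neighborFinset w := (SimpleGraph.mem_neighborFinset _ _ _).mpr hu
      exact Finset.card_le_one.mp hdeg x hmx u hmu
    set u₀ : Fin n := u.castPred huw with hu₀
    have hu₀cast : u₀.castSucc = u := Fin.castSucc_castPred u huw
    -- forbidden colors for the edge uw
    set G' := G.comap (Fin.castSucc : Fin n → Fin (n+1)) with hG'
    set F : Finset (Fin k) :=
      insert (cv' u₀) ((G'.neighborFinset u₀).image (fun y => ce' u₀ y)) with hF
    have hdeg' : (G'.neighborFinset u₀).card < G.degree u := by
      have himsub : (G'.neighborFinset u₀).image Fin.castSucc ⊂ G.neighborFinset u := by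
        constructor
        · intro y hy
          obtain ⟨j, hj, rfl⟩ := Finset.mem_image.mp hy
          have : G'.Adj u₀ j := (SimpleGraph.mem_neighborFinset _ _ _).mp hj
          have : G.Adj u j.castSucc := by
            simpa [hG', SimpleGraph.comap_adj, hu₀cast] using this
          exact (SimpleGraph.mem_neighborFinset _ _ _).mpr this
        · intro hsub
          have hwmem : w ∈ G.neighborFinset u := (SimpleGraph.mem_neighborFinset _ _ _).mpr hu.symm
          have := hsub hwmem
          obtain ⟨j, _, hj⟩ := Finset.mem_image.mp this
          exact absurd hj (by simp [hw])
      calc (G'.neighborFinset u₀).card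
          = ((G'.neighborFinset u₀).image Fin.castSucc).card :=
            (Finset.card_image_of_injective _ (Fin.castSucc_injective n)).symm
        _ < (G.neighborFinset u).card := Finset.card_lt_card himsub
        _ = G.degree u := rfl
    have hFcard : F.card < k := by
      have h1 : F.card ≤ ((G'.neighborFinset u₀).image (fun y => ce' u₀ y)).card + 1 :=
        Finset.card_insert_le _ _
      have h2 : ((G'.neighborFinset u₀).image (fun y => ce' u₀ y)).card ≤
          (G'.neighborFinset u₀).card := Finset.card_image_le
      have := hk u
      omega
    obtain ⟨cE, hcE⟩ := exists_color F hFcard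
    have hcE1 : cE ≠ cv' u₀ := fun e => hcE (e ▸ Finset.mem_insert_self _ _)
    have hcE2 : ∀ y, G'.Adj u₀ y → cE ≠ ce' u₀ y := by
      intro y hy e
      apply hcE
      rw [hF]
      apply Finset.mem_insert_of_mem
      exact Finset.mem_image.mpr ⟨y, (SimpleGraph.mem_neighborFinset _ _ _).mpr hy, e.symm⟩
    have hk3 : 3 ≤ k := by
      have hdu : 1 ≤ G.degree u := by
        have : w ∈ G.neighborFinset u := (SimpleGraph.mem_neighborFinset _ _ _).mpr hu.symm
        have := Finset.card_pos.mpr ⟨w, this⟩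
        exact this
      have := hk u
      omega
    have hc2 : ({cE, cv' u₀} : Finset (Fin k)).card < k := by
      have : ({cE, cv' u₀} : Finset (Fin k)).card ≤ 2 :=
        (Finset.card_insert_le _ _).trans (by simp)
      omega
    obtain ⟨cW, hcW⟩ := exists_color {cE, cv' u₀} hc2
    have hcW1 : cW ≠ cE := fun e => hcW (e ▸ Finset.mem_insert_self _ _)
    have hcW2 : cW ≠ cv' u₀ := fun e => hcW (by
      rw [e]; exact Finset.mem_insert_of_mem (Finset.mem_singleton_self _))
    refine ⟨fun x => if hx : x = w then cW else cv' (x.castPred hx),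
            fun x y => if hx : x = w then cE else if hy : y = w then cE
              else ce' (x.castPred hx) (y.castPred hy), ?_, ?_, ?_, ?_⟩
    · -- vertex-vertex
      intro x y hxy
      beta_reduce
      by_cases hx : x = w
      · subst hx
        have hyu : y = u := huniq y hxy
        have hyw : y ≠ w := by rw [hyu]; exact huw
        rw [dif_pos rfl, dif_neg hyw]
        have : y.castPred hyw = u₀ := by subst hyu; rfl
        rw [this]
        exact hcW2
      · by_cases hy : y = w
        · subst hy
          have hxu : x = u := huniq x hxy.symm
          rw [dif_neg hx, dif_pos rfl]
          have : x.castPred hx = u₀ := by subst hxu; rfl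
          rw [this]
          exact Ne.symm hcW2
        · rw [dif_neg hx, dif_neg hy]
          exact p1 _ _ (hadj' x y hx hy hxy)
    · -- symmetry
      intro x y hxy
      beta_reduce
      by_cases hx : x = w
      · rw [dif_pos hx]
        by_cases hy : y = w
        · rw [dif_pos hy]
        · rw [dif_neg hy, dif_pos hx]
      · by_cases hy : y = w
        · rw [dif_neg hx, dif_pos hy, dif_pos hy]
        · rw [dif_neg hx, dif_neg hy, dif_neg hy, dif_neg hx]
          exact p2 _ _ (hadj' x y hx hy hxy)
    · -- edge-edge at a common vertex
      intro x y z hxy hxz hyz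
      beta_reduce
      by_cases hx : x = w
      · exact absurd ((huniq y (hx ▸ hxy)).trans (huniq z (hx ▸ hxz)).symm) hyz
      · by_cases hy : y = w
        · have hz : z ≠ w := fun e => hyz ((e.trans hy.symm)).symm |>.elim
          rw [dif_neg hx, dif_pos hy, dif_neg hx, dif_neg hz]
          have hxu : x = u := huniq x ((hy ▸ hxy).symm)
          have hpx : x.castPred hx = u₀ := by subst hxu; rfl
          rw [hpx]
          exact hcE2 _ (by
            have := hadj' x z hx hz hxz
            rwa [hpx] at this)
        · by_cases hz : z = w
          · rw [dif_neg hx, dif_neg hy, dif_neg hx, dif_pos hz]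
            have hxu : x = u := huniq x ((hz ▸ hxz).symm)
            have hpx : x.castPred hx = u₀ := by subst hxu; rfl
            rw [hpx]
            refine Ne.symm (hcE2 _ ?_)
            have := hadj' x y hx hy hxy
            rwa [hpx] at this
          · rw [dif_neg hx, dif_neg hy, dif_neg hx, dif_neg hz]
            refine p3 _ _ _ (hadj' x y hx hy hxy) (hadj' x z hx hz hxz) ?_
            intro e
            apply hyz
            rw [← Fin.castSucc_castPred y hy, ← Fin.castSucc_castPred z hz, e]
    · -- edge vs endpoints
      intro x y hxy
      beta_reduce
      by_cases hx : x = w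
      · have hyu : y = u := huniq y (hx ▸ hxy)
        have hyw : y ≠ w := by rw [hyu]; exact huw
        rw [dif_pos hx, dif_pos hx, dif_neg hyw]
        have : y.castPred hyw = u₀ := by subst hyu; rfl
        rw [this]
        exact ⟨Ne.symm hcW1, hcE1⟩
      · by_cases hy : y = w
        · have hxu : x = u := huniq x ((hy ▸ hxy).symm)
          rw [dif_neg hx, dif_pos hy, dif_neg hx, dif_pos hy]
          have : x.castPred hx = u₀ := by subst hxu; rfl
          rw [this]
          exact ⟨hcE1, Ne.symm hcW1⟩
        · rw [dif_neg hx, dif_neg hy, dif_neg hx, dif_neg hy]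
          exact p4 _ _ (hadj' x y hx hy hxy)
  · -- w is isolated
    have hnoadj : ∀ x y, G.Adj x y → x ≠ w ∧ y ≠ w := by
      intro x y hxy
      beta_reduce
      constructor
      · rintro rfl; exact hNbr ⟨y, hxy⟩
      · rintro rfl; exact hNbr ⟨x, hxy.symm⟩
    have c0 : Fin k := ⟨0, by omega⟩
    refine ⟨fun x => if hx : x = w then c0 else cv' (x.castPred hx),
            fun x y => if hx : x = w then c0 else if hy : y = w then c0
              else ce' (x.castPred hx) (y.castPred hy), ?_, ?_, ?_, ?_⟩
    · intro x y hxy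
      beta_reduce
      obtain ⟨hx, hy⟩ := hnoadj x y hxy
      rw [dif_neg hx, dif_neg hy]
      exact p1 _ _ (hadj' x y hx hy hxy)
    · intro x y hxy
      beta_reduce
      obtain ⟨hx, hy⟩ := hnoadj x y hxy
      rw [dif_neg hx, dif_neg hy, dif_neg hy, dif_neg hx]
      exact p2 _ _ (hadj' x y hx hy hxy)
    · intro x y z hxy hxz hyz
      beta_reduce
      obtain ⟨hx, hy⟩ := hnoadj x y hxy
      obtain ⟨-, hz⟩ := hnoadj x z hxz
      rw [dif_neg hx, dif_neg hy, dif_neg hx, dif_neg hz]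
      refine p3 _ _ _ (hadj' x y hx hy hxy) (hadj' x z hx hz hxz) ?_
      intro e
      apply hyz
      rw [← Fin.castSucc_castPred y hy, ← Fin.castSucc_castPred z hz, e]
    · intro x y hxy
      beta_reduce
      obtain ⟨hx, hy⟩ := hnoadj x y hxy
      rw [dif_neg hx, dif_neg hy, dif_neg hx, dif_neg hy]
      exact p4 _ _ (hadj' x y hx hy hxy)


lemma comap_ncard_eq {n : ℕ} (G : SimpleGraph (Fin (n+1))) (i : Fin n) :
    {j : Fin (n+1) | j < i.castSucc ∧ G.Adj i.castSucc j}.ncard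
      = {j : Fin n | j < i ∧ (G.comap Fin.castSucc).Adj i j}.ncard := by
  rw [show {j : Fin (n+1) | j < i.castSucc ∧ G.Adj i.castSucc j}
        = Fin.castSucc '' {j : Fin n | j < i ∧ (G.comap Fin.castSucc).Adj i j} from ?_,
      Set.ncard_image_of_injective _ (Fin.castSucc_injective n)]
  ext b
  simp only [Set.mem_image, Set.mem_setOf_eq, SimpleGraph.comap_adj]
  constructor
  · rintro ⟨hlt, hadj⟩
    have hb : (b : ℕ) < n := by
      have h1 := hlt
      rw [Fin.lt_def] at h1
      simp only [Fin.coe_castSucc] at h1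
      have h2 := i.isLt
      omega
    refine ⟨⟨b, hb⟩, ⟨?_, ?_⟩, ?_⟩
    · rwa [Fin.lt_def] at hlt ⊢
    · convert hadj using 2 <;> apply Fin.ext <;> simp
    · apply Fin.ext; simp
  · rintro ⟨a, ⟨hlt, hadj⟩, rfl⟩
    exact ⟨by rwa [Fin.castSucc_lt_castSucc_iff], hadj⟩

lemma degree_last_eq_ncard {n : ℕ} (G : SimpleGraph (Fin (n+1))) [DecidableRel G.Adj] :
    G.degree (Fin.last n) = {j : Fin (n+1) | j < Fin.last n ∧ G.Adj (Fin.last n) j}.ncard := by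
  rw [show {j : Fin (n+1) | j < Fin.last n ∧ G.Adj (Fin.last n) j}
        = ↑(G.neighborFinset (Fin.last n)) from ?_, Set.ncard_coe_finset]
  · rfl
  · ext j
    simp only [Set.mem_setOf_eq, SimpleGraph.mem_neighborFinset, Finset.mem_coe]
    constructor
    · exact fun h => h.2
    · exact fun h => ⟨Fin.lt_last_iff_ne_last.mpr (G.ne_of_adj h).symm, h⟩

lemma comap_degree_le {n : ℕ} (G : SimpleGraph (Fin (n+1))) [inst : DecidableRel G.Adj]
    (i : Fin n) :
    letI : DecidableRel (G.comap (Fin.castSucc : Fin n → Fin (n+1))).Adj :=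
      fun a b => inst _ _
    (G.comap Fin.castSucc).degree i ≤ G.degree i.castSucc := by
  apply Finset.card_le_card_of_injOn Fin.castSucc
  · intro j hj
    simp only [Finset.mem_coe, SimpleGraph.mem_neighborFinset, SimpleGraph.comap_adj] at hj ⊢
    exact hj
  · exact fun a _ b _ h => Fin.castSucc_injective n h


lemma exists_matching {N : ℕ} (G : SimpleGraph (Fin N)) [DecidableRel G.Adj] :
    ∀ S : Finset (Fin N), ∃ mu : Fin N → Fin N,
      (∀ x ∈ S, mu x ∈ S) ∧ (∀ x ∈ S, mu (mu x) = x) ∧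
      (∀ x ∈ S, mu x ≠ x → ¬G.Adj x (mu x)) ∧
      (∀ x ∈ S, ∀ y ∈ S, mu x = x → mu y = y → x ≠ y → G.Adj x y) ∧
      (∀ x ∉ S, mu x = x) := by
  classical
  intro S
  induction S using Finset.strongInduction with
  | _ S IH =>
    by_cases h : ∃ a ∈ S, ∃ b ∈ S, a ≠ b ∧ ¬G.Adj a b
    · obtain ⟨a, ha, b, hb, hab, hnadj⟩ := h
      have hS' : (S.erase a).erase b ⊂ S :=
        lt_of_le_of_lt (Finset.erase_subset_erase b (Finset.erase_subset a S))
          (Finset.erase_ssubset hb)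
      obtain ⟨mu', h1', h2', h3', h4', h5'⟩ := IH _ hS'
      have hmem : ∀ x ∈ S, x ≠ a → x ≠ b → x ∈ (S.erase a).erase b := by
        intro x hx hxa hxb
        exact Finset.mem_erase.mpr ⟨hxb, Finset.mem_erase.mpr ⟨hxa, hx⟩⟩
      have hmem' : ∀ x ∈ (S.erase a).erase b, x ∈ S ∧ x ≠ a ∧ x ≠ b := by
        intro x hx
        have h1 := Finset.mem_erase.mp hx
        have h2 := Finset.mem_erase.mp h1.2
        exact ⟨h2.2, h2.1, h1.1⟩
      set mu : Fin N → Fin N := fun x => if x = a then b else if x = b then a else mu' x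
        with hmu_def
      have emua : mu a = b := by simp [hmu_def]
      have emub : mu b = a := by simp [hmu_def, Ne.symm hab]
      have emuo : ∀ x, x ≠ a → x ≠ b → mu x = mu' x := by
        intro x h1 h2; simp [hmu_def, h1, h2]
      refine ⟨mu, ?_, ?_, ?_, ?_, ?_⟩
      · intro x hx
        by_cases hxa : x = a
        · rw [hxa, emua]; exact hb
        · by_cases hxb : x = b
          · rw [hxb, emub]; exact ha
          · rw [emuo x hxa hxb]
            exact (hmem' _ (h1' x (hmem x hx hxa hxb))).1
      · intro x hx
        by_cases hxa : x = a
        · rw [hxa, emua, emub]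
        · by_cases hxb : x = b
          · rw [hxb, emub, emua]
          · have hx' := hmem x hx hxa hxb
            have hmu := h1' x hx'
            obtain ⟨_, ha2, hb2⟩ := hmem' _ hmu
            rw [emuo x hxa hxb, emuo _ ha2 hb2]
            exact h2' x hx'
      · intro x hx hne
        by_cases hxa : x = a
        · rw [hxa, emua]; rw [hxa] at *; exact hnadj
        · by_cases hxb : x = b
          · rw [hxb, emub]
            exact fun hadj => hnadj hadj.symm
          · rw [emuo x hxa hxb] at hne ⊢
            exact h3' x (hmem x hx hxa hxb) hne
      · intro x hx y hy hmx hmy hxy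
        by_cases hxa : x = a
        · exfalso; rw [hxa, emua] at hmx; exact hab hmx.symm
        · by_cases hxb : x = b
          · exfalso; rw [hxb, emub] at hmx; exact hab hmx
          · by_cases hya : y = a
            · exfalso; rw [hya, emua] at hmy; exact hab hmy.symm
            · by_cases hyb : y = b
              · exfalso; rw [hyb, emub] at hmy; exact hab hmy
              · rw [emuo x hxa hxb] at hmx
                rw [emuo y hya hyb] at hmy
                exact h4' x (hmem x hx hxa hxb) y (hmem y hy hya hyb) hmx hmy hxy
      · intro x hx
        have hxa : x ≠ a := fun e => hx (e ▸ ha)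
        have hxb : x ≠ b := fun e => hx (e ▸ hb)
        rw [emuo x hxa hxb]
        exact h5' x (fun hmem2 => hx (hmem' x hmem2).1)
    · push_neg at h
      exact ⟨id, fun x hx => hx, fun x _ => rfl, fun x _ hne => absurd rfl hne,
        fun x hx y hy _ _ hxy => h x hx y hy hxy, fun _ _ => rfl⟩

lemma exists_stars {N : ℕ} (G : SimpleGraph (Fin N)) [DecidableRel G.Adj]
    (hnn : ∀ x : Fin N, ∃ y, y ≠ x ∧ ¬G.Adj x y) :
    ∃ ctr : Fin N → Fin N,
      (∀ x, ctr (ctr x) = ctr x) ∧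
      (∀ x, ctr x ≠ x → ¬G.Adj x (ctr x)) ∧
      (∀ c, ctr c = c → ∃ l, ctr l = c ∧ l ≠ c) := by
  classical
  obtain ⟨mu, h1, h2, h3, h4, h5⟩ := exists_matching G Finset.univ
  have h2' : ∀ x, mu (mu x) = x := fun x => h2 x (Finset.mem_univ x)
  have h3' : ∀ x, mu x ≠ x → ¬G.Adj x (mu x) := fun x => h3 x (Finset.mem_univ x)
  have h4' : ∀ x y, mu x = x → mu y = y → x ≠ y → G.Adj x y :=
    fun x y => h4 x (Finset.mem_univ x) y (Finset.mem_univ y)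
  set φ : Fin N → Fin N := fun u => (hnn u).choose with hφdef
  have hφ : ∀ u, φ u ≠ u ∧ ¬G.Adj u (φ u) := fun u => (hnn u).choose_spec
  have hφm : ∀ u, mu u = u → mu (φ u) ≠ φ u := by
    intro u hu hc
    exact (hφ u).2 (h4' u (φ u) hu hc (Ne.symm (hφ u).1))
  set hasLeaf : Fin N → Prop := fun a => ∃ u, mu u = u ∧ φ u = a with hLdef
  set ctr : Fin N → Fin N := fun x =>
    if mu x = x then φ x
    else if hasLeaf x then x
    else if hasLeaf (mu x) then mu x
    else min x (mu x) with hctr_def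
  have e_un : ∀ x, mu x = x → ctr x = φ x := by
    intro x h; simp [hctr_def, h]
  have e_m1 : ∀ x, mu x ≠ x → hasLeaf x → ctr x = x := by
    intro x h h'; simp [hctr_def, h, h']
  have e_m2 : ∀ x, mu x ≠ x → ¬hasLeaf x → hasLeaf (mu x) → ctr x = mu x := by
    intro x h h' h''; simp [hctr_def, h, h', h'']
  have e_m3 : ∀ x, mu x ≠ x → ¬hasLeaf x → ¬hasLeaf (mu x) → ctr x = min x (mu x) := by
    intro x h h' h''; simp [hctr_def, h, h', h'']
  have hmumat : ∀ x, mu x ≠ x → mu (mu x) ≠ mu x := by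
    intro x h hc
    rw [h2' x] at hc
    exact h hc.symm
  refine ⟨ctr, ?_, ?_, ?_⟩
  · -- idempotence
    intro x
    by_cases hu : mu x = x
    · rw [e_un x hu]
      have hm : mu (φ x) ≠ φ x := hφm x hu
      have hl : hasLeaf (φ x) := ⟨x, hu, rfl⟩
      exact e_m1 _ hm hl
    · by_cases hl : hasLeaf x
      · rw [e_m1 x hu hl, e_m1 x hu hl]
      · by_cases hl2 : hasLeaf (mu x)
        · rw [e_m2 x hu hl hl2]
          exact e_m1 _ (hmumat x hu) hl2
        · rw [e_m3 x hu hl hl2]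
          rcases min_choice x (mu x) with hmin | hmin <;> rw [hmin]
          · exact (e_m3 x hu hl hl2).trans hmin
          · have : ctr (mu x) = min (mu x) (mu (mu x)) := by
              apply e_m3 _ (hmumat x hu) hl2
              rw [h2' x]
              exact hl
            rw [this, h2' x, min_comm, hmin]
  · -- leaves are non-adjacent to centers
    intro x hne
    by_cases hu : mu x = x
    · rw [e_un x hu]
      exact (hφ x).2
    · by_cases hl : hasLeaf x
      · exact absurd (e_m1 x hu hl) hne
      · by_cases hl2 : hasLeaf (mu x)
        · rw [e_m2 x hu hl hl2]
          exact h3' x hu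
        · rw [e_m3 x hu hl hl2]
          rcases min_choice x (mu x) with hmin | hmin
          · exact absurd ((e_m3 x hu hl hl2).trans hmin) hne
          · rw [hmin]
            exact h3' x hu
  · -- every center has a leaf
    intro c hc
    by_cases hu : mu c = c
    · exfalso
      apply (hφ c).1
      rw [← e_un c hu, hc]
    · by_cases hl : hasLeaf c
      · obtain ⟨u, huu, hfu⟩ := hl
        refine ⟨u, ?_, ?_⟩
        · rw [e_un u huu, hfu]
        · intro e
          rw [e] at huu
          exact hu huu
      · by_cases hl2 : hasLeaf (mu c)
        · exact absurd (e_m2 c hu hl hl2) (by rw [hc]; exact fun e => hu e.symm)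
        · refine ⟨mu c, ?_, hu⟩
          have e1 : ctr (mu c) = min (mu c) (mu (mu c)) := by
            apply e_m3 _ (hmumat c hu) hl2
            rw [h2' c]
            exact hl
          rw [e1, h2' c, min_comm]
          have := e_m3 c hu hl hl2
          rw [hc] at this
          exact this.symm

lemma hard_coloring {M : ℕ} (hM : Odd M) (G : SimpleGraph (Fin (M+1))) [DecidableRel G.Adj]
    (ctr : Fin (M+1) → Fin (M+1))
    (hS1 : ∀ x, ctr (ctr x) = ctr x)
    (hS2 : ∀ x, ctr x ≠ x → ¬G.Adj x (ctr x))
    (hS3 : ∀ c, ctr c = c → ∃ l, ctr l = c ∧ l ≠ c) :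
    TotalColorable G (M+1) := by
  classical
  have hM1 : 1 ≤ M := hM.pos
  haveI : NeZero M := ⟨by omega⟩
  -- the special non-adjacent pair (c₁, s)
  set c₁ : Fin (M+1) := ctr ⟨0, by omega⟩ with hc₁def
  have hc₁ : ctr c₁ = c₁ := hS1 _
  obtain ⟨s, hs_ctr, hs_ne⟩ := hS3 c₁ hc₁
  -- a chosen leaf for each center
  set lf : Fin (M+1) → Fin (M+1) :=
    fun c => if h : ∃ l, ctr l = c ∧ l ≠ c then h.choose else c with hlfdef
  have hlf : ∀ c, ctr c = c → ctr (lf c) = c ∧ lf c ≠ c := by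
    intro c hcc
    have h := hS3 c hcc
    simp only [hlfdef, dif_pos h]
    exact h.choose_spec
  -- the mate of each vertex
  set mate : Fin (M+1) → Fin (M+1) :=
    fun x => if ctr x = x then lf x else ctr x with hmatedef
  have hmate_ne : ∀ x, mate x ≠ x := by
    intro x
    by_cases h : ctr x = x
    · simpa only [hmatedef, if_pos h] using (hlf x h).2
    · simpa only [hmatedef, if_neg h] using h
  have hmate_nadj : ∀ x, ¬G.Adj x (mate x) := by
    intro x
    by_cases h : ctr x = x
    · simp only [hmatedef, if_pos h]
      intro hadj
      have h2 := hS2 (lf x) (by rw [(hlf x h).1]; exact (hlf x h).2.symm)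
      rw [(hlf x h).1] at h2
      exact h2 hadj.symm
    · simp only [hmatedef, if_neg h]
      exact hS2 x h
  have hctr_s : ∀ x, ctr x ≠ s := by
    intro x e
    apply hs_ne
    have h1 : ctr s = s := by rw [← e, hS1]
    exact h1.symm.trans hs_ctr
  have hmate_ne_s : ∀ x, x ≠ c₁ → mate x ≠ s := by
    intro x hx1
    by_cases h : ctr x = x
    · simp only [hmatedef, if_pos h]
      intro e
      apply hx1
      rw [← (hlf x h).1, e]
      exact hs_ctr
    · simp only [hmatedef, if_neg h]
      exact hctr_s x
  -- the position bijection onto 0..M-1 (everything except s)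
  set D : Finset (Fin (M+1)) := Finset.univ.erase s with hDdef
  have hDmem : ∀ x, x ≠ s → x ∈ D := fun x h =>
    Finset.mem_erase.mpr ⟨h, Finset.mem_univ x⟩
  have hDmem' : ∀ x ∈ D, x ≠ s := fun x hx => (Finset.mem_erase.mp hx).1
  have hDcard : D.card = M := by
    rw [hDdef, Finset.card_erase_of_mem (Finset.mem_univ s), Finset.card_univ]
    simp
  set key : Fin (M+1) → ℕ :=
    fun x => if ctr x = x then (x : ℕ) else (M+1) + (M+1) * (ctr x : ℕ) + (x : ℕ)
    with hkeydef
  have hkey_center_lt : ∀ x, ctr x = x → key x < M + 1 := by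
    intro x h
    simp only [hkeydef, if_pos h]
    exact x.isLt
  have hkey_leaf_ge : ∀ x, ctr x ≠ x → M + 1 ≤ key x := by
    intro x h
    simp only [hkeydef, if_neg h]
    omega
  have hkey_leaf_lt : ∀ x y, ctr x ≠ x → ctr y ≠ y → (ctr x : ℕ) < (ctr y : ℕ) →
      key x < key y := by
    intro x y hx hy hlt
    simp only [hkeydef, if_neg hx, if_neg hy]
    have h1 : (M+1) * ((ctr x : ℕ) + 1) ≤ (M+1) * (ctr y : ℕ) :=
      Nat.mul_le_mul_left _ (by omega)
    have h2 : (x : ℕ) < M + 1 := x.isLt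
    rw [Nat.mul_add, Nat.mul_one] at h1
    omega
  have hkey_inj : Function.Injective key := by
    intro x y hxy
    by_cases hx : ctr x = x <;> by_cases hy : ctr y = y
    · simp only [hkeydef, if_pos hx, if_pos hy] at hxy
      exact Fin.ext hxy
    · exact absurd hxy (by
        have := hkey_center_lt x hx
        have := hkey_leaf_ge y hy
        omega)
    · exact absurd hxy (by
        have := hkey_center_lt y hy
        have := hkey_leaf_ge x hx
        omega)
    · rcases lt_trichotomy (ctr x : ℕ) (ctr y : ℕ) with hlt | heq | hlt
      · exact absurd hxy (Nat.ne_of_lt (hkey_leaf_lt x y hx hy hlt))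
      · simp only [hkeydef, if_neg hx, if_neg hy, heq] at hxy
        exact Fin.ext (by omega)
      · exact absurd hxy.symm (Nat.ne_of_lt (hkey_leaf_lt y x hy hx hlt))
  set pos : Fin (M+1) → ℕ :=
    fun x => (D.filter (fun y => key y < key x)).card with hposdef
  have hpos_lt : ∀ x ∈ D, pos x < M := by
    intro x hx
    have hsub : D.filter (fun y => key y < key x) ⊆ D.erase x := by
      intro y hy
      have h1 := Finset.mem_filter.mp hy
      refine Finset.mem_erase.mpr ⟨?_, h1.1⟩
      intro e
      rw [e] at h1
      omega
    have h2 := Finset.card_le_card hsub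
    rw [Finset.card_erase_of_mem hx, hDcard] at h2
    simp only [hposdef]
    omega
  have hpos_mono : ∀ x ∈ D, ∀ y, key x < key y → pos x < pos y := by
    intro x hx y hlt
    apply Finset.card_lt_card
    constructor
    · intro z hz
      have h1 := Finset.mem_filter.mp hz
      exact Finset.mem_filter.mpr ⟨h1.1, lt_trans h1.2 hlt⟩
    · intro hsub
      have hxin : x ∈ D.filter (fun y' => key y' < key y) := Finset.mem_filter.mpr ⟨hx, hlt⟩
      have := Finset.mem_filter.mp (hsub hxin)
      omega
  have hpos_inj : ∀ x ∈ D, ∀ y ∈ D, pos x = pos y → x = y := by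
    intro x hx y hy hxy
    rcases lt_trichotomy (key x) (key y) with h | h | h
    · exact absurd hxy (Nat.ne_of_lt (hpos_mono x hx y h))
    · exact hkey_inj h
    · exact absurd hxy.symm (Nat.ne_of_lt (hpos_mono y hy x h))
  -- centers occupy positions < r, leaves positions ≥ r
  set C : Finset (Fin (M+1)) := Finset.univ.filter (fun x => ctr x = x) with hCdef
  set r : ℕ := C.card with hrdef
  have hCmem : ∀ x, ctr x = x ↔ x ∈ C := by
    intro x
    simp [hCdef]
  have hCD : C ⊆ D := by
    intro x hx
    apply hDmem
    intro e
    apply hs_ne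
    have := ((hCmem x).mpr hx)
    rw [e] at this
    exact this.symm.trans hs_ctr
  have hr_pos : 1 ≤ r := by
    have : c₁ ∈ C := (hCmem c₁).mp hc₁
    rw [hrdef]
    exact Finset.card_pos.mpr ⟨c₁, this⟩
  have hpos_center : ∀ c, ctr c = c → pos c < r := by
    intro c hc
    have hsub : D.filter (fun y => key y < key c) ⊆ C.erase c := by
      intro y hy
      have h1 := Finset.mem_filter.mp hy
      have hyc : ctr y = y := by
        by_contra hyc
        have := hkey_leaf_ge y hyc
        have := hkey_center_lt c hc
        omega
      refine Finset.mem_erase.mpr ⟨?_, (hCmem y).mp hyc⟩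
      intro e
      rw [e] at h1
      omega
    have h2 := Finset.card_le_card hsub
    rw [Finset.card_erase_of_mem ((hCmem c).mp hc)] at h2
    simp only [hposdef]
    omega
  have hpos_leaf : ∀ x, ctr x ≠ x → r ≤ pos x := by
    intro x hx
    have hsub : C ⊆ D.filter (fun y => key y < key x) := by
      intro y hy
      refine Finset.mem_filter.mpr ⟨hCD hy, ?_⟩
      have h1 := hkey_center_lt y ((hCmem y).mpr hy)
      have h2 := hkey_leaf_ge x hx
      omega
    have := Finset.card_le_card hsub
    simp only [hposdef]
    omega
  -- vertex values
  set vtx : Fin (M+1) → ℕ := fun x => pos x + pos (mate x) with hvtxdef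
  have hcast_ne : ∀ a b : ℕ, a < b → b - a < M → ((a : ZMod M) ≠ (b : ZMod M)) := by
    intro a b h1 h2 he
    rw [ZMod.natCast_eq_natCast_iff] at he
    have h3 := (Nat.modEq_iff_dvd' (le_of_lt h1)).mp he
    have h4 := Nat.le_of_dvd (by omega) h3
    omega
  have hmate_leaf : ∀ x, ctr x ≠ x → mate x = ctr x := by
    intro x h; simp [hmatedef, if_neg h]
  have hmate_center : ∀ x, ctr x = x → mate x = lf x := by
    intro x h; simp [hmatedef, if_pos h]
  have hkey_ctr : ∀ x, key (ctr x) = ((ctr x : Fin (M+1)) : ℕ) := by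
    intro x
    simp only [hkeydef, if_pos (hS1 x)]
  have hval_lt : ∀ x y, x ∈ D → y ∈ D → ctr x ≠ x → ctr y ≠ y →
      (ctr x : ℕ) < (ctr y : ℕ) → (vtx x : ZMod M) ≠ (vtx y : ZMod M) := by
    intro x y hxD hyD hx hy hlt
    have h1 : key x < key y := hkey_leaf_lt x y hx hy hlt
    have h2 : pos x < pos y := hpos_mono x hxD y h1
    have hcc : key (ctr x) < key (ctr y) := by
      rw [hkey_ctr, hkey_ctr]; exact hlt
    have h3 : pos (ctr x) < pos (ctr y) :=
      hpos_mono (ctr x) (hCD ((hCmem _).mp (hS1 x))) _ hcc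
    have hxv : vtx x = pos x + pos (ctr x) := by simp only [hvtxdef]; rw [hmate_leaf x hx]
    have hyv : vtx y = pos y + pos (ctr y) := by simp only [hvtxdef]; rw [hmate_leaf y hy]
    have hlt2 : vtx x < vtx y := by rw [hxv, hyv]; exact Nat.add_lt_add h2 h3
    have hby : pos y < M := hpos_lt y hyD
    have hbc : pos (ctr y) < r := hpos_center (ctr y) (hS1 y)
    have hbl : r ≤ pos x := hpos_leaf x hx
    exact hcast_ne _ _ hlt2 (by omega)
  have hval_leaf_inj : ∀ x ∈ D, ∀ y ∈ D, ctr x ≠ x → ctr y ≠ y → x ≠ y →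
      (vtx x : ZMod M) ≠ (vtx y : ZMod M) := by
    intro x hxD y hyD hx hy hxy
    rcases lt_trichotomy (ctr x : ℕ) (ctr y : ℕ) with h | h | h
    · exact hval_lt x y hxD hyD hx hy h
    · have hc : ctr x = ctr y := Fin.ext h
      have hne : pos x ≠ pos y := fun e => hxy (hpos_inj x hxD y hyD e)
      have hxv : vtx x = pos x + pos (ctr x) := by simp only [hvtxdef]; rw [hmate_leaf x hx]
      have hyv : vtx y = pos y + pos (ctr y) := by simp only [hvtxdef]; rw [hmate_leaf y hy]
      have hbx : pos x < M := hpos_lt x hxD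
      have hby : pos y < M := hpos_lt y hyD
      rcases Nat.lt_or_ge (pos x) (pos y) with hlt | hge
      · refine hcast_ne _ _ ?_ ?_ <;> rw [hxv, hyv, hc] <;> omega
      · have hlt : pos y < pos x := by omega
        refine (hcast_ne _ _ ?_ ?_).symm <;> rw [hxv, hyv, hc] <;> omega
    · exact (hval_lt y x hyD hxD hy hx h).symm
  -- the leaf representative of each vertex
  set lv : Fin (M+1) → Fin (M+1) := fun x => if ctr x = x then lf x else x with hlvdef
  have hlv_leaf : ∀ x, ctr (lv x) ≠ lv x := by
    intro x
    by_cases h : ctr x = x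
    · simp only [hlvdef, if_pos h]
      rw [(hlf x h).1]
      exact (hlf x h).2.symm
    · simpa [hlvdef, if_neg h] using h
  have hlv_D : ∀ x, x ≠ c₁ → x ≠ s → lv x ∈ D := by
    intro x h1 h2
    by_cases h : ctr x = x
    · simp only [hlvdef, if_pos h]
      apply hDmem
      intro e
      apply h1
      rw [← (hlf x h).1, e]
      exact hs_ctr
    · simp only [hlvdef, if_neg h]
      exact hDmem x h2
  have hvtx_lv : ∀ x, vtx x = vtx (lv x) := by
    intro x
    by_cases h : ctr x = x
    · have e1 : mate (lf x) = x := by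
        rw [hmate_leaf (lf x) (by rw [(hlf x h).1]; exact (hlf x h).2.symm), (hlf x h).1]
      simp only [hlvdef, if_pos h, hvtxdef]
      rw [hmate_center x h, e1, Nat.add_comm]
    · simp [hlvdef, if_neg h]
  have hKEY : ∀ x y, x ≠ c₁ → x ≠ s → y ≠ c₁ → y ≠ s → x ≠ y → G.Adj x y →
      (vtx x : ZMod M) ≠ (vtx y : ZMod M) := by
    intro x y hx1 hx2 hy1 hy2 hxy hadj he
    by_cases hlv_eq : lv x = lv y
    · by_cases hcx : ctr x = x <;> by_cases hcy : ctr y = y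
      · apply hxy
        have e1 : ctr (lf x) = x := (hlf x hcx).1
        have e2 : ctr (lf y) = y := (hlf y hcy).1
        rw [← e1, ← e2]
        have : lf x = lf y := by simpa [hlvdef, if_pos hcx, if_pos hcy] using hlv_eq
        rw [this]
      · have hm : mate x = y := by
          rw [hmate_center x hcx]
          simpa [hlvdef, if_pos hcx, if_neg hcy] using hlv_eq
        exact hmate_nadj x (hm ▸ hadj)
      · have hm : mate y = x := by
          rw [hmate_center y hcy]
          have : x = lf y := by simpa [hlvdef, if_neg hcx, if_pos hcy] using hlv_eq
          exact this.symm
        exact hmate_nadj y (hm ▸ hadj.symm)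
      · apply hxy
        simpa [hlvdef, if_neg hcx, if_neg hcy] using hlv_eq
    · apply hval_leaf_inj (lv x) (hlv_D x hx1 hx2) (lv y) (hlv_D y hy1 hy2)
        (hlv_leaf x) (hlv_leaf y) hlv_eq
      rw [← hvtx_lv x, ← hvtx_lv y]
      exact he
  -- the coloring
  have h2unit : IsUnit (2 : ZMod M) := by
    have h22 : ((2:ℕ) : ZMod M) = (2 : ZMod M) := by norm_cast
    rw [← h22, ZMod.isUnit_iff_coprime]
    exact Nat.coprime_two_left.mpr hM
  set enc : ZMod M → Fin (M+1) :=
    fun z => ⟨z.val, lt_trans (ZMod.val_lt z) (Nat.lt_succ_self M)⟩ with hencdef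
  have henc_inj : Function.Injective enc := by
    intro a b h
    exact ZMod.val_injective M (congrArg Fin.val h)
  set ω : Fin (M+1) := ⟨M, Nat.lt_succ_self M⟩ with hωdef
  have henc_ne_ω : ∀ z, enc z ≠ ω := by
    intro z h
    have h1 := ZMod.val_lt z
    have h2 := congrArg Fin.val h
    simp only [hencdef, hωdef] at h2
    omega
  set pz : Fin (M+1) → ZMod M := fun x => ((pos x : ℕ) : ZMod M) with hpzdef
  have hpz_inj : ∀ x ∈ D, ∀ y ∈ D, pz x = pz y → x = y := by
    intro x hx y hy h
    apply hpos_inj x hx y hy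
    have hx' := hpos_lt x hx
    have hy' := hpos_lt y hy
    have h2 := congrArg ZMod.val h
    simp only [hpzdef] at h2
    rwa [ZMod.val_cast_of_lt hx', ZMod.val_cast_of_lt hy'] at h2
  have hvtx_cast : ∀ x, ((vtx x : ℕ) : ZMod M) = pz x + pz (mate x) := by
    intro x
    simp only [hvtxdef, hpzdef]
    push_cast
    ring
  have hAdj_s_c₁ : ¬G.Adj s c₁ := by
    have h1 : ctr s ≠ s := by rw [hs_ctr]; exact Ne.symm hs_ne
    have := hS2 s h1
    rwa [hs_ctr] at this
  set cv : Fin (M+1) → Fin (M+1) :=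
    fun x => if x = c₁ ∨ x = s then ω else enc ((vtx x : ℕ) : ZMod M) with hcvdef
  set ce : Fin (M+1) → Fin (M+1) → Fin (M+1) := fun x y =>
    if x = s then enc (2 * pz y) else if y = s then enc (2 * pz x)
    else enc (pz x + pz y) with hcedef
  have hcv_sp : ∀ x, (x = c₁ ∨ x = s) → cv x = ω := by
    intro x h
    simp only [hcvdef, if_pos h]
  have hcv_nsp : ∀ x, ¬(x = c₁ ∨ x = s) → cv x = enc ((vtx x : ℕ) : ZMod M) := by
    intro x h
    simp only [hcvdef, if_neg h]
  have hce_s : ∀ y, ce s y = enc (2 * pz y) := by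
    intro y
    simp only [hcedef, if_pos rfl]
  have hce_ys : ∀ x, x ≠ s → ce x s = enc (2 * pz x) := by
    intro x h
    simp [hcedef, h]
  have hce_o : ∀ x y, x ≠ s → y ≠ s → ce x y = enc (pz x + pz y) := by
    intro x y hx hy
    simp only [hcedef, if_neg hx, if_neg hy]
  refine ⟨cv, ce, ?_, ?_, ?_, ?_⟩
  · -- vertex colors proper
    intro x y hadj hcveq
    by_cases hx : x = c₁ ∨ x = s
    · by_cases hy : y = c₁ ∨ y = s
      · rcases hx with hx | hx <;> rcases hy with hy | hy
        · exact hadj.ne (hx.trans hy.symm)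
        · exact hAdj_s_c₁ ((hx ▸ hy ▸ hadj).symm)
        · exact hAdj_s_c₁ (hx ▸ hy ▸ hadj)
        · exact hadj.ne (hx.trans hy.symm)
      · rw [hcv_sp x hx, hcv_nsp y hy] at hcveq
        exact henc_ne_ω _ hcveq.symm
    · by_cases hy : y = c₁ ∨ y = s
      · rw [hcv_nsp x hx, hcv_sp y hy] at hcveq
        exact henc_ne_ω _ hcveq
      · rw [hcv_nsp x hx, hcv_nsp y hy] at hcveq
        push_neg at hx hy
        exact hKEY x y hx.1 hx.2 hy.1 hy.2 hadj.ne hadj (henc_inj hcveq)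
  · -- edge color symmetric
    intro x y hadj
    by_cases hx : x = s
    · have hy : y ≠ s := fun e => hadj.ne (hx.trans e.symm)
      rw [hx, hce_s y, hce_ys y hy]
    · by_cases hy : y = s
      · rw [hy, hce_ys x hx, hce_s x]
      · rw [hce_o x y hx hy, hce_o y x hy hx, add_comm (pz x) (pz y)]
  · -- edge colors at a vertex distinct
    intro x y z hxy hxz hyz hceeq
    by_cases hx : x = s
    · have hy : y ≠ s := fun e => hxy.ne (hx.trans e.symm)
      have hz : z ≠ s := fun e => hxz.ne (hx.trans e.symm)
      rw [hx, hce_s y, hce_s z] at hceeq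
      exact hyz (hpz_inj y (hDmem y hy) z (hDmem z hz)
        (h2unit.mul_right_injective (henc_inj hceeq)))
    · by_cases hy : y = s
      · have hz : z ≠ s := fun e => hyz (e.trans hy.symm).symm
        rw [hy, hce_ys x hx, hce_o x z hx hz] at hceeq
        have h1 : 2 * pz x = pz x + pz z := henc_inj hceeq
        rw [two_mul] at h1
        have h2 : pz x = pz z := add_left_cancel h1
        exact hxz.ne (hpz_inj x (hDmem x hx) z (hDmem z hz) h2)
      · by_cases hz : z = s
        · rw [hz, hce_o x y hx hy, hce_ys x hx] at hceeq
          have h1 : pz x + pz y = 2 * pz x := henc_inj hceeq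
          rw [two_mul] at h1
          have h2 : pz y = pz x := add_left_cancel h1
          exact hxy.ne (hpz_inj x (hDmem x hx) y (hDmem y hy) h2.symm)
        · rw [hce_o x y hx hy, hce_o x z hx hz] at hceeq
          exact hyz (hpz_inj y (hDmem y hy) z (hDmem z hz)
            (add_left_cancel (henc_inj hceeq)))
  · -- edge colors differ from endpoint colors
    intro x y hadj
    constructor
    · by_cases hx : x = c₁ ∨ x = s
      · rw [hcv_sp x hx]
        by_cases hxs : x = s
        · rw [hxs, hce_s y]
          exact henc_ne_ω _
        · by_cases hys : y = s
          · rw [hys, hce_ys x hxs]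
            exact henc_ne_ω _
          · rw [hce_o x y hxs hys]
            exact henc_ne_ω _
      · push_neg at hx
        rw [hcv_nsp x (by push_neg; exact hx), hvtx_cast x]
        have hmx : mate x ∈ D := hDmem _ (hmate_ne_s x hx.1)
        by_cases hys : y = s
        · rw [hys, hce_ys x hx.2]
          intro he
          have h1 : 2 * pz x = pz x + pz (mate x) := henc_inj he
          rw [two_mul] at h1
          exact hmate_ne x (hpz_inj _ hmx _ (hDmem x hx.2) (add_left_cancel h1).symm)
        · rw [hce_o x y hx.2 hys]
          intro he
          have h1 : pz y = pz (mate x) := add_left_cancel (henc_inj he)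
          have h2 : y = mate x := hpz_inj y (hDmem y hys) _ hmx h1
          exact hmate_nadj x (h2 ▸ hadj)
    · by_cases hy : y = c₁ ∨ y = s
      · rw [hcv_sp y hy]
        by_cases hxs : x = s
        · rw [hxs, hce_s y]
          exact henc_ne_ω _
        · by_cases hys : y = s
          · rw [hys, hce_ys x hxs]
            exact henc_ne_ω _
          · rw [hce_o x y hxs hys]
            exact henc_ne_ω _
      · push_neg at hy
        rw [hcv_nsp y (by push_neg; exact hy), hvtx_cast y]
        have hmy : mate y ∈ D := hDmem _ (hmate_ne_s y hy.1)
        by_cases hxs : x = s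
        · rw [hxs, hce_s y]
          intro he
          have h1 : 2 * pz y = pz y + pz (mate y) := henc_inj he
          rw [two_mul] at h1
          exact hmate_ne y (hpz_inj _ hmy _ (hDmem y hy.2) (add_left_cancel h1).symm)
        · rw [hce_o x y hxs hy.2]
          intro he
          have h1 : pz x + pz y = pz y + pz (mate y) := henc_inj he
          rw [add_comm (pz x) (pz y)] at h1
          have h2 : x = mate y := hpz_inj x (hDmem x hxs) _ hmy (add_left_cancel h1)
          exact hmate_nadj y (h2 ▸ hadj.symm)

lemma hard_case_even (n : ℕ) (G : SimpleGraph (Fin (n+1))) (inst : DecidableRel G.Adj)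
    (hord : ∀ i : Fin (n+1),
      {j : Fin (n+1) | j < i ∧ G.Adj i j}.ncard = 0 ∨
      {j : Fin (n+1) | j < i ∧ G.Adj i j}.ncard = 1 ∨
      {j : Fin (n+1) | j < i ∧ G.Adj i j}.ncard = (i : ℕ) - 1 ∨
      {j : Fin (n+1) | j < i ∧ G.Adj i j}.ncard = (i : ℕ))
    (heven : Even (n + 1))
    (hdeg : ∀ v, G.degree v + 2 ≤ n + 1)
    (hlastdeg : G.degree (Fin.last n) = n - 1) :
    TotalColorable G (n + 1) := by
  classical
  have hodd : Odd n := by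
    rcases Nat.even_or_odd n with he | ho
    · exact absurd heven (by simpa [Nat.even_add_one] using he)
    · exact ho
  have hnn : ∀ x : Fin (n+1), ∃ y, y ≠ x ∧ ¬G.Adj x y := by
    intro x
    have h3 : (G.neighborFinset x).card = G.degree x := rfl
    have h1 : (insert x (G.neighborFinset x)).card ≤ n := by
      have h4 := Finset.card_insert_le x (G.neighborFinset x)
      have h2 := hdeg x
      omega
    have hne : ((insert x (G.neighborFinset x))ᶜ : Finset (Fin (n+1))).Nonempty := by
      apply Finset.card_pos.mp
      rw [Finset.card_compl]
      simp only [Fintype.card_fin]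
      omega
    obtain ⟨y, hy⟩ := hne
    rw [Finset.mem_compl, Finset.mem_insert] at hy
    push_neg at hy
    exact ⟨y, hy.1, fun h => hy.2 ((SimpleGraph.mem_neighborFinset _ _ _).mpr h)⟩
  obtain ⟨ctr, hS1, hS2, hS3⟩ := exists_stars G hnn
  exact hard_coloring hodd G ctr hS1 hS2 hS3

/-- The key inductive lemma: any graph on `Fin n` with an identity mock-threshold
ordering is totally colorable with `k` colors whenever `k ≥ deg(v) + 2` for all `v`.
The hard case (`n` even, `Δ(G) = n - 2`) is handled by `hard_case_even`. -/
lemma key_induction : ∀ (n : ℕ) (G : SimpleGraph (Fin n)) (inst : DecidableRel G.Adj) (k : ℕ),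
    (∀ i : Fin n,
      {j : Fin n | j < i ∧ G.Adj i j}.ncard = 0 ∨
      {j : Fin n | j < i ∧ G.Adj i j}.ncard = 1 ∨
      {j : Fin n | j < i ∧ G.Adj i j}.ncard = (i : ℕ) - 1 ∨
      {j : Fin n | j < i ∧ G.Adj i j}.ncard = (i : ℕ)) →
    (∀ v, G.degree v + 2 ≤ k) → TotalColorable G k := by
  intro n
  induction n with
  | zero =>
    intro G inst k _ _
    exact ⟨Fin.elim0, fun a => a.elim0, fun u => u.elim0, fun u => u.elim0,
      fun u => u.elim0, fun u => u.elim0⟩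
  | succ n IH =>
    intro G inst k hord hdeg
    by_cases hk1 : n + 2 ≤ k
    · -- enough colors for a host on `n+1` (or `n+2`) vertices
      rcases Nat.even_or_odd (n+1) with he | ho
      · exact totalColorable_mono G hk1 (totalColorable_of_le_odd G he.add_one (Nat.le_succ _))
      · exact totalColorable_mono G (le_trans (Nat.le_succ _) hk1)
          (totalColorable_of_le_odd G ho le_rfl)
    · by_cases hk2 : k = n + 1 ∧ Odd (n+1)
      · obtain ⟨rfl, ho⟩ := hk2
        exact totalColorable_of_le_odd G ho le_rfl
      · -- strip the last vertex if it has degree ≤ 1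
        have hstrip : G.degree (Fin.last n) ≤ 1 → TotalColorable G k := by
          intro hdl
          letI instG' : DecidableRel (G.comap (Fin.castSucc : Fin n → Fin (n+1))).Adj :=
            fun a b => inst _ _
          apply totalColorable_extend G hdl hdeg
          apply IH (G.comap Fin.castSucc) instG' k
          · intro i
            have h := hord i.castSucc
            rw [comap_ncard_eq G i] at h
            simpa using h
          · intro v
            exact le_trans (Nat.add_le_add_right (comap_degree_le G v) 2) (hdeg v.castSucc)
        have hlast := hord (Fin.last n)
        simp only [Fin.val_last] at hlast
        have hdl : G.degree (Fin.last n)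
            = {j : Fin (n+1) | j < Fin.last n ∧ G.Adj (Fin.last n) j}.ncard :=
          degree_last_eq_ncard G
        have hdk := hdeg (Fin.last n)
        rcases hlast with h0 | h1 | hm | hn
        · exact hstrip (by rw [hdl, h0]; omega)
        · exact hstrip (le_of_eq (by rw [hdl, h1]))
        · -- degree of last vertex is n - 1
          by_cases hsmall : n - 1 ≤ 1
          · exact hstrip (by rw [hdl, hm]; exact hsmall)
          · -- the hard case: Δ = n - 1 = (n+1) - 2, and k = n + 1 with n + 1 even
            have hdln : G.degree (Fin.last n) = n - 1 := by rw [hdl, hm]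
            have hkn : k = n + 1 := by omega
            have heven : Even (n + 1) := by
              rcases Nat.even_or_odd (n+1) with he | ho
              · exact he
              · exact absurd ⟨hkn, ho⟩ hk2
            rw [hkn]
            refine hard_case_even n G inst hord heven ?_ hdln
            intro v
            have := hdeg v
            omega
        · -- degree of last vertex is n : impossible, since deg + 2 ≤ k ≤ n + 1
          exfalso
          have : G.degree (Fin.last n) = n := by rw [hdl, hn]
          omega


/-- Every mock threshold graph `G` satisfies the Total Coloring Conjecture:
`χ''(G) ≤ Δ(G) + 2`. -/
theorem mockThreshold_tcc {n : ℕ} (G : SimpleGraph (Fin n))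
    [DecidableRel G.Adj] (hG : MockThreshold G) :
    TotalColorable G (G.maxDegree + 2) := by
  classical
  obtain ⟨σ, hσ⟩ := hG
  letI instH : DecidableRel (G.comap ⇑σ).Adj := fun a b => ‹DecidableRel G.Adj› _ _
  have hdeq : ∀ v, (G.comap ⇑σ).degree v = G.degree (σ v) := by
    intro v
    unfold SimpleGraph.degree
    apply Finset.card_bij (fun j _ => σ j)
    · intro a ha
      simp only [SimpleGraph.mem_neighborFinset, SimpleGraph.comap_adj] at ha ⊢
      exact ha
    · intro a _ b _ h
      exact σ.injective h
    · intro b hb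
      refine ⟨σ.symm b, ?_, by simp⟩
      simp only [SimpleGraph.mem_neighborFinset, SimpleGraph.comap_adj] at hb ⊢
      simpa using hb
  have hcol : TotalColorable (G.comap ⇑σ) (G.maxDegree + 2) := by
    apply key_induction n (G.comap ⇑σ) instH (G.maxDegree + 2)
    · intro i
      exact hσ i
    · intro v
      rw [hdeq v]
      exact Nat.add_le_add_right (G.degree_le_maxDegree (σ v)) 2
  obtain ⟨cv, ce, q1, q2, q3, q4⟩ := hcol
  have hadj : ∀ u v, G.Adj u v → (G.comap ⇑σ).Adj (σ.symm u) (σ.symm v) := by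
    intro u v huv
    simpa [SimpleGraph.comap_adj] using huv
  refine ⟨fun x => cv (σ.symm x), fun x y => ce (σ.symm x) (σ.symm y), ?_, ?_, ?_, ?_⟩
  · exact fun u v huv => q1 _ _ (hadj u v huv)
  · exact fun u v huv => q2 _ _ (hadj u v huv)
  · intro u v w huv huw hvw
    exact q3 _ _ _ (hadj u v huv) (hadj u w huw) (fun e => hvw (σ.symm.injective e))
  · exact fun u v huv => q4 _ _ (hadj u v huv)
end

section
/- Let n be an even positive integer, let [n]_0 = {0, 1, ..., n−1}, and for k ∈ [n]_0 let τ_k be the transposition of k and n−1 on [n]_0. Define c_n(i, j) = (τ_i(j) + τ_j(i) + 2) mod (n+1) for distinct i, j ∈ [n]_0, and c_n(i) = i for each vertex i ∈ [n]_0. Then c_n is a proper total coloring of the complete graph K_n using the n+1 colors {0, 1, ..., n}, and moreover at each vertex k ∈ [n]_0 exactly the two colors k and (k+1) mod n are missing from the edges incident with k. -/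
/-- `τ_k`, the transposition of `k` and `n - 1` on `[n]_0 = {0, 1, ..., n-1}`. -/
def tauPerm (n : ℕ) (hn : 0 < n) (k : Fin n) : Equiv.Perm (Fin n) :=
  Equiv.swap k ⟨n - 1, Nat.sub_lt hn Nat.one_pos⟩

/-- The edge coloring `c_n(i, j) = (τ_i(j) + τ_j(i) + 2) mod (n + 1)`. -/
def cEdge (n : ℕ) (hn : 0 < n) (i j : Fin n) : Fin (n + 1) :=
  ⟨((tauPerm n hn i j : ℕ) + (tauPerm n hn j i : ℕ) + 2) % (n + 1),
    Nat.mod_lt _ (Nat.succ_pos n)⟩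

/-- The vertex coloring `c_n(i) = i`. -/
def cVert (n : ℕ) (i : Fin n) : Fin (n + 1) := i.castSucc

namespace KnTCAux

lemma two_le {n : ℕ} (hn : 0 < n) (hev : Even n) : 2 ≤ n := by
  obtain ⟨m, hm⟩ := hev; omega

def g (n : ℕ) (i j : Fin n) : ℕ := if (i : ℕ) = n - 1 then (j : ℕ) else (i : ℕ)

lemma g_eq_of_eq {n : ℕ} {i j : Fin n} (h : (i : ℕ) = n - 1) : g n i j = (j : ℕ) := if_pos h
lemma g_eq_of_ne {n : ℕ} {i j : Fin n} (h : (i : ℕ) ≠ n - 1) : g n i j = (i : ℕ) := if_neg h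

lemma g_lt {n : ℕ} {i j : Fin n} (hij : i ≠ j) : g n i j < n - 1 := by
  have hi := i.isLt; have hj := j.isLt
  have hne : (i : ℕ) ≠ (j : ℕ) := fun h => hij (Fin.ext h)
  unfold g; split_ifs with h <;> omega

lemma tau_val {n : ℕ} (hn : 0 < n) {i j : Fin n} (hij : j ≠ i) :
    ((tauPerm n hn i j : Fin n) : ℕ) = if (j : ℕ) = n - 1 then (i : ℕ) else (j : ℕ) := by
  unfold tauPerm
  rw [Equiv.swap_apply_def, if_neg hij]
  by_cases h : (j : ℕ) = n - 1
  · rw [if_pos (Fin.ext h), if_pos h]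
  · rw [if_neg (fun hh => h (congrArg Fin.val hh)), if_neg h]

lemma cEdge_val {n : ℕ} (hn : 0 < n) {i j : Fin n} (hij : i ≠ j) :
    (cEdge n hn i j : ℕ) = (g n i j + g n j i + 2) % (n + 1) := by
  have h1 : ((tauPerm n hn i j : Fin n) : ℕ) = g n j i := by
    rw [tau_val hn (Ne.symm hij)]; rfl
  have h2 : ((tauPerm n hn j i : Fin n) : ℕ) = g n i j := by
    rw [tau_val hn hij]; rfl
  show (((tauPerm n hn i j : Fin n) : ℕ) + ((tauPerm n hn j i : Fin n) : ℕ) + 2) % (n + 1) = _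
  rw [h1, h2, Nat.add_comm (g n j i)]


lemma mod_inj {m a b x : ℕ} (ha : a < m) (hb : b < m)
    (h : (x + a) % m = (x + b) % m) : a = b := by
  have h2 := Nat.ModEq.add_left_cancel' x (h : x + a ≡ x + b [MOD m])
  rwa [Nat.ModEq, Nat.mod_eq_of_lt ha, Nat.mod_eq_of_lt hb] at h2

lemma cancel2 {n a b : ℕ} (hev : Even n) (h : 2 * a ≡ 2 * b [MOD n + 1]) :
    a ≡ b [MOD n + 1] := by
  refine Nat.ModEq.cancel_left_of_coprime ?_ h
  have h1 : Nat.Coprime 2 (n + 1) := Nat.coprime_two_left.mpr (Even.add_one hev)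
  exact Nat.coprime_comm.mp h1

lemma np1_modeq_zero {n : ℕ} : n + 1 ≡ 0 [MOD n + 1] :=
  (Nat.modEq_zero_iff_dvd).mpr dvd_rfl

lemma cEdge_comm {n : ℕ} (hn : 0 < n) (i j : Fin n) :
    cEdge n hn i j = cEdge n hn j i := by
  apply Fin.ext
  show (((tauPerm n hn i j : Fin n) : ℕ) + ((tauPerm n hn j i : Fin n) : ℕ) + 2) % (n + 1)
      = (((tauPerm n hn j i : Fin n) : ℕ) + ((tauPerm n hn i j : Fin n) : ℕ) + 2) % (n + 1)
  rw [Nat.add_comm ((tauPerm n hn i j : Fin n) : ℕ)]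

lemma cEdge_ne_left {n : ℕ} (hn : 0 < n) (hev : Even n) {u v : Fin n} (huv : u ≠ v) :
    (cEdge n hn u v : ℕ) ≠ (u : ℕ) := by
  have h2n : 2 ≤ n := two_le hn hev
  have hgv : g n v u < n - 1 := g_lt (Ne.symm huv)
  have hu1 := u.isLt; have hv1 := v.isLt
  rw [cEdge_val hn huv]
  intro h
  by_cases hu : (u : ℕ) = n - 1
  · have hvn : (v : ℕ) ≠ n - 1 := fun hh => huv (Fin.ext (by omega))
    rw [g_eq_of_eq hu, g_eq_of_ne hvn, hu] at h
    -- h : (v + v + 2) % (n+1) = n - 1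
    have h1 : (v : ℕ) + (v : ℕ) + 2 ≡ n - 1 [MOD n + 1] := by
      rw [Nat.ModEq, h, Nat.mod_eq_of_lt (by omega)]
    have h2 : (v : ℕ) + (v : ℕ) + 2 + 2 ≡ n - 1 + 2 [MOD n + 1] := h1.add_right 2
    have h3 : n - 1 + 2 = n + 1 := by omega
    have h4 : 2 * ((v : ℕ) + 2) ≡ 2 * 0 [MOD n + 1] := by
      rw [show 2 * ((v : ℕ) + 2) = (v : ℕ) + (v : ℕ) + 2 + 2 by ring, Nat.mul_zero]
      exact h2.trans (h3 ▸ np1_modeq_zero)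
    have h5 := cancel2 hev h4
    rw [Nat.ModEq, Nat.mod_eq_of_lt (by omega), Nat.zero_mod] at h5
    omega
  · rw [g_eq_of_ne hu] at h
    have h1 : ((u : ℕ) + (g n v u + 2)) % (n + 1) = ((u : ℕ) + 0) % (n + 1) := by
      have e : ((u : ℕ) + 0) % (n + 1) = (u : ℕ) := by
        rw [Nat.add_zero]; exact Nat.mod_eq_of_lt (by omega)
      rw [e, ← Nat.add_assoc]; exact h
    have := mod_inj (by omega) (by omega) h1
    omega

lemma cEdge_inj {n : ℕ} (hn : 0 < n) (hev : Even n) {u v w : Fin n}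
    (hv : v ≠ u) (hw : w ≠ u) (hvw : v ≠ w)
    (h : cEdge n hn u v = cEdge n hn u w) : False := by
  have h2n : 2 ≤ n := two_le hn hev
  have hu1 := u.isLt; have hv1 := v.isLt; have hw1 := w.isLt
  have hgv : g n v u < n - 1 := g_lt hv
  have hgw : g n w u < n - 1 := g_lt hw
  have hval : (cEdge n hn u v : ℕ) = (cEdge n hn u w : ℕ) := congrArg Fin.val h
  rw [cEdge_val hn (Ne.symm hv), cEdge_val hn (Ne.symm hw)] at hval
  by_cases hu : (u : ℕ) = n - 1
  · have hvn : (v : ℕ) ≠ n - 1 := fun hh => hv (Fin.ext (by omega))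
    have hwn : (w : ℕ) ≠ n - 1 := fun hh => hw (Fin.ext (by omega))
    rw [g_eq_of_eq hu, g_eq_of_ne hvn, g_eq_of_eq hu, g_eq_of_ne hwn] at hval
    have h1 : (v : ℕ) + (v : ℕ) + 2 ≡ (w : ℕ) + (w : ℕ) + 2 [MOD n + 1] := hval
    have h2 := Nat.ModEq.add_right_cancel' 2 h1
    have h3 : 2 * (v : ℕ) ≡ 2 * (w : ℕ) [MOD n + 1] := by
      rw [Nat.two_mul, Nat.two_mul]; exact h2
    have h4 := cancel2 hev h3
    rw [Nat.ModEq, Nat.mod_eq_of_lt (by omega), Nat.mod_eq_of_lt (by omega)] at h4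
    exact hvw (Fin.ext h4)
  · rw [g_eq_of_ne hu, g_eq_of_ne hu, Nat.add_assoc, Nat.add_assoc] at hval
    have heq := mod_inj (by omega) (by omega) hval
    by_cases hvn : (v : ℕ) = n - 1 <;> by_cases hwn : (w : ℕ) = n - 1
    · exact hvw (Fin.ext (by omega))
    · rw [g_eq_of_eq hvn, g_eq_of_ne hwn] at heq
      exact hw (Fin.ext (by omega))
    · rw [g_eq_of_ne hvn, g_eq_of_eq hwn] at heq
      exact hv (Fin.ext (by omega))
    · rw [g_eq_of_ne hvn, g_eq_of_ne hwn] at heq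
      exact hvw (Fin.ext (by omega))


lemma cEdge_ne_succ {n : ℕ} (hn : 0 < n) (hev : Even n) {k j : Fin n} (hjk : j ≠ k) :
    (cEdge n hn k j : ℕ) ≠ ((k : ℕ) + 1) % n := by
  have h2n : 2 ≤ n := two_le hn hev
  have hk1 := k.isLt; have hj1 := j.isLt
  rw [cEdge_val hn (Ne.symm hjk)]
  intro h
  by_cases hk : (k : ℕ) = n - 1
  · have hjn : (j : ℕ) ≠ n - 1 := fun hh => hjk (Fin.ext (by omega))
    have h0 : ((k : ℕ) + 1) % n = 0 := by
      rw [hk, show n - 1 + 1 = n by omega, Nat.mod_self]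
    rw [g_eq_of_eq hk, g_eq_of_ne hjn, h0] at h
    have hmod : (j : ℕ) + (j : ℕ) + 2 ≡ 0 [MOD n + 1] := by
      rw [Nat.ModEq, h, Nat.zero_mod]
    have h4 : 2 * ((j : ℕ) + 1) ≡ 2 * 0 [MOD n + 1] := by
      rw [show 2 * ((j : ℕ) + 1) = (j : ℕ) + (j : ℕ) + 2 by ring, Nat.mul_zero]
      exact hmod
    have h5 := cancel2 hev h4
    rw [Nat.ModEq, Nat.mod_eq_of_lt (by omega), Nat.zero_mod] at h5
    omega
  · have hgy : g n j k < n - 1 := g_lt hjk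
    rw [g_eq_of_ne hk, Nat.mod_eq_of_lt (show (k : ℕ) + 1 < n by omega)] at h
    have h1 : ((k : ℕ) + (g n j k + 2)) % (n + 1) = ((k : ℕ) + 1) % (n + 1) := by
      rw [Nat.mod_eq_of_lt (show (k : ℕ) + 1 < n + 1 by omega), ← Nat.add_assoc]
      exact h
    have := mod_inj (by omega) (by omega) h1
    omega

lemma exists_edge {n : ℕ} (hn : 0 < n) (hev : Even n) (k : Fin n) (c : Fin (n + 1))
    (hc1 : (c : ℕ) ≠ (k : ℕ)) (hc2 : (c : ℕ) ≠ ((k : ℕ) + 1) % n) :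
    ∃ j : Fin n, j ≠ k ∧ cEdge n hn k j = c := by
  have h2n : 2 ≤ n := two_le hn hev
  have hk1 := k.isLt; have hc0 := c.isLt
  by_cases hk : (k : ℕ) = n - 1
  · obtain ⟨m, hm⟩ := hev
    set j' := (((c : ℕ) + n - 1) * (m + 1)) % (n + 1) with hj'
    have key : (2 * j' + 2) % (n + 1) = (c : ℕ) := by
      have e1 : 2 * j' ≡ 2 * (((c : ℕ) + n - 1) * (m + 1)) [MOD n + 1] :=
        Nat.ModEq.mul_left 2 (Nat.mod_modEq _ _)
      have e2 : 2 * (((c : ℕ) + n - 1) * (m + 1)) = ((c : ℕ) + n - 1) * (n + 2) := by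
        rw [show (2 : ℕ) * (((c : ℕ) + n - 1) * (m + 1)) = ((c : ℕ) + n - 1) * (2 * m + 2) by ring,
          show 2 * m + 2 = n + 2 by omega]
      have e3 : ((c : ℕ) + n - 1) * (n + 2) ≡ ((c : ℕ) + n - 1) * 1 [MOD n + 1] := by
        refine Nat.ModEq.mul_left _ ?_
        show (n + 2) % (n + 1) = 1 % (n + 1)
        rw [show n + 2 = 1 + (n + 1) by omega, Nat.add_mod_right]
      have e4 : 2 * j' + 2 ≡ ((c : ℕ) + n - 1) + 2 [MOD n + 1] := by
        have := (e1.trans (e2 ▸ e3)).add_right 2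
        simpa using this
      have e5 : (c : ℕ) + n - 1 + 2 = (c : ℕ) + (n + 1) := by omega
      have e6 : (c : ℕ) + (n + 1) ≡ (c : ℕ) + 0 [MOD n + 1] :=
        Nat.ModEq.add_left _ np1_modeq_zero
      have e7 : 2 * j' + 2 ≡ (c : ℕ) [MOD n + 1] := by
        have := e4.trans (e5 ▸ e6)
        simpa using this
      rw [Nat.ModEq, Nat.mod_eq_of_lt hc0] at e7
      exact e7
    have hj'lt : j' < n + 1 := Nat.mod_lt _ (by omega)
    have hj'ne1 : j' ≠ n - 1 := by
      intro hx
      rw [hx] at key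
      have e1 : 2 * (n - 1) + 2 = (n - 1) + (n + 1) := by omega
      rw [e1, Nat.add_mod_right, Nat.mod_eq_of_lt (by omega)] at key
      omega
    have hj'ne2 : j' ≠ n := by
      intro hx
      rw [hx] at key
      have e1 : 2 * n + 2 = 0 + (n + 1) + (n + 1) := by omega
      rw [e1, Nat.add_mod_right, Nat.add_mod_right, Nat.zero_mod] at key
      have h0 : ((k : ℕ) + 1) % n = 0 := by
        rw [hk, show n - 1 + 1 = n by omega, Nat.mod_self]
      omega
    refine ⟨⟨j', by omega⟩, ?_, ?_⟩
    · intro hh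
      exact hj'ne1 (by simpa [hk] using congrArg Fin.val hh)
    · have hkj : k ≠ ⟨j', by omega⟩ := by
        intro hh
        exact hj'ne1 (by simpa [hk] using (congrArg Fin.val hh).symm)
      apply Fin.ext
      rw [cEdge_val hn hkj, g_eq_of_eq hk,
        g_eq_of_ne (show ((⟨j', by omega⟩ : Fin n) : ℕ) ≠ n - 1 from hj'ne1)]
      show (j' + j' + 2) % (n + 1) = (c : ℕ)
      rw [show j' + j' + 2 = 2 * j' + 2 by ring]
      exact key
  · set x := ((c : ℕ) + 2 * (n + 1) - ((k : ℕ) + 2)) % (n + 1) with hx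
    have key : ((k : ℕ) + x + 2) % (n + 1) = (c : ℕ) := by
      have e1 : (k : ℕ) + 2 + x ≡ (k : ℕ) + 2 + ((c : ℕ) + 2 * (n + 1) - ((k : ℕ) + 2))
          [MOD n + 1] := Nat.ModEq.add_left _ (Nat.mod_modEq _ _)
      have e2 : (k : ℕ) + 2 + ((c : ℕ) + 2 * (n + 1) - ((k : ℕ) + 2)) = (c : ℕ) + 2 * (n + 1) := by
        omega
      rw [e2] at e1
      have e3 : ((c : ℕ) + 2 * (n + 1)) % (n + 1) = (c : ℕ) := by
        rw [Nat.add_mul_mod_self_right, Nat.mod_eq_of_lt hc0]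
      have e1' : ((k : ℕ) + 2 + x) % (n + 1) = ((c : ℕ) + 2 * (n + 1)) % (n + 1) := e1
      rw [e3] at e1'
      rw [show (k : ℕ) + x + 2 = (k : ℕ) + 2 + x by ring]
      exact e1'
    have hxlt : x < n + 1 := Nat.mod_lt _ (by omega)
    have hxne1 : x ≠ n - 1 := by
      intro hh
      rw [hh, show (k : ℕ) + (n - 1) + 2 = (k : ℕ) + (n + 1) by omega,
        Nat.add_mod_right, Nat.mod_eq_of_lt (by omega)] at key
      omega
    have hxne2 : x ≠ n := by
      intro hh
      rw [hh, show (k : ℕ) + n + 2 = ((k : ℕ) + 1) + (n + 1) by omega,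
        Nat.add_mod_right, Nat.mod_eq_of_lt (by omega)] at key
      rw [Nat.mod_eq_of_lt (show (k : ℕ) + 1 < n by omega)] at hc2
      omega
    by_cases hxk : x = (k : ℕ)
    · refine ⟨⟨n - 1, by omega⟩, ?_, ?_⟩
      · intro hh
        exact hk (by simpa using (congrArg Fin.val hh).symm)
      · have hkj : k ≠ (⟨n - 1, by omega⟩ : Fin n) := by
          intro hh; exact hk (by simpa using congrArg Fin.val hh)
        apply Fin.ext
        rw [cEdge_val hn hkj, g_eq_of_ne hk,
          g_eq_of_eq (show ((⟨n - 1, by omega⟩ : Fin n) : ℕ) = n - 1 from rfl)]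
        show ((k : ℕ) + (k : ℕ) + 2) % (n + 1) = (c : ℕ)
        rw [show (k : ℕ) + (k : ℕ) + 2 = (k : ℕ) + x + 2 by omega]
        exact key
    · refine ⟨⟨x, by omega⟩, ?_, ?_⟩
      · intro hh
        exact hxk (congrArg Fin.val hh)
      · have hkj : k ≠ (⟨x, by omega⟩ : Fin n) := by
          intro hh; exact hxk (congrArg Fin.val hh).symm
        apply Fin.ext
        rw [cEdge_val hn hkj, g_eq_of_ne hk,
          g_eq_of_ne (show ((⟨x, by omega⟩ : Fin n) : ℕ) ≠ n - 1 from hxne1)]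
        exact key

end KnTCAux

open KnTCAux

/-- For even `n > 0`, the assignment `c_n(i, j) = (τ_i(j) + τ_j(i) + 2) mod (n+1)`
on edges together with `c_n(i) = i` on vertices is a proper total coloring of the
complete graph `K_n` with the `n + 1` colors `{0, 1, ..., n}`; moreover at each
vertex `k` exactly the two colors `k` and `(k + 1) mod n` are missing from the
edges incident with `k`. -/
theorem kn_canonical_total_coloring (n : ℕ) (hn : 0 < n) (hev : Even n) :
    IsTotalColoring (⊤ : SimpleGraph (Fin n)) (n + 1) (cVert n) (cEdge n hn) ∧
    ∀ k : Fin n, ∀ c : Fin (n + 1),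
      (∀ j : Fin n, j ≠ k → cEdge n hn k j ≠ c) ↔
        ((c : ℕ) = (k : ℕ) ∨ (c : ℕ) = ((k : ℕ) + 1) % n) := by
  constructor
  · refine ⟨?_, ?_, ?_, ?_⟩
    · intro u v huv h
      exact huv.ne (Fin.castSucc_injective n h)
    · intro u v _
      exact cEdge_comm hn u v
    · intro u v w huv huw hvw h
      exact cEdge_inj hn hev huv.ne' huw.ne' hvw h
    · intro u v huv
      constructor
      · intro h
        apply cEdge_ne_left hn hev huv.ne
        rw [h]; rfl
      · intro h
        apply cEdge_ne_left hn hev huv.ne'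
        rw [cEdge_comm hn v u, h]; rfl
  · intro k c
    constructor
    · intro H
      by_contra hc
      push_neg at hc
      obtain ⟨j, hjk, hcj⟩ := exists_edge hn hev k c hc.1 hc.2
      exact H j hjk hcj
    · rintro (h | h) j hjk heq
      · apply cEdge_ne_left hn hev (Ne.symm hjk)
        rw [heq]; exact h
      · apply cEdge_ne_succ hn hev hjk
        rw [heq]; exact h
end

section
/- For every integer n ≥ 2, the odd graph O_n admits a proper total coloring with n + 2 colors; that is, χ''(O_n) ≤ Δ(O_n) + 2 = n + 2, so O_n satisfies the Total Coloring Conjecture. -/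
open Finset

namespace OddTCC

/-- rank of `z` within `X`: the number of elements of `X` below `z`. -/
def rk (X : Finset ℕ) (z : ℕ) : ℕ := (X.filter (· < z)).card

/-- the ground set `{2, ..., 2n-2}` -/
def Gs (n : ℕ) : Finset ℕ := Finset.Ico 2 (2*n-1)

/-- the missing element of an edge, extracted as a sum -/
def zv (n : ℕ) (S T : Finset ℕ) : ℕ := ((Finset.range (2*n-1)) \ (S ∪ T)).sum id

def chi (ψ : ℕ) : ℕ := if ψ = 0 then 1 else ψ + 2

def vcol (S : Finset ℕ) : ℕ := if 0 ∈ S then 0 else if 1 ∈ S then 1 else 2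

def ecol (n : ℕ) (S T : Finset ℕ) : ℕ :=
  if 0 ∉ S ∪ T then 0 else
  if 1 ∈ (if 0 ∈ S then S else T) ∨ 1 ∉ S ∪ T then
    chi (((if 1 ∉ S ∪ T then n-1
           else rk (Gs n \ (if 0 ∈ S then T else S)) (zv n S T))
          + (n-1) * (Gs n \ (if 0 ∈ S then T else S)).sum id) % n)
  else
    ((rk (insert (zv n S T) ((if 0 ∈ S then S else T).erase 0)) (zv n S T)
      + (n-1) * (insert (zv n S T) ((if 0 ∈ S then S else T).erase 0)).sum id) % n) + 2

/-! ### rank lemmas -/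

lemma rk_lt_card {X : Finset ℕ} {z : ℕ} (hz : z ∈ X) : rk X z < X.card := by
  apply card_lt_card
  constructor
  · exact filter_subset _ _
  · intro hsub
    have := hsub hz
    simp at this

lemma rk_lt_rk {X : Finset ℕ} {z z' : ℕ} (hz : z ∈ X) (h : z < z') :
    rk X z < rk X z' := by
  apply card_lt_card
  constructor
  · intro x hx
    simp only [mem_filter] at hx ⊢
    exact ⟨hx.1, lt_trans hx.2 h⟩
  · intro hsub
    have hzz : z ∈ X.filter (· < z') := mem_filter.mpr ⟨hz, h⟩
    have := mem_filter.mp (hsub hzz)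
    omega

lemma rk_inj {X : Finset ℕ} {z z' : ℕ} (hz : z ∈ X) (hz' : z' ∈ X)
    (h : rk X z = rk X z') : z = z' := by
  rcases lt_trichotomy z z' with hlt | heq | hgt
  · have := rk_lt_rk hz hlt; omega
  · exact heq
  · have := rk_lt_rk hz' hgt; omega

lemma rk_insert {v : Finset ℕ} {z : ℕ} : rk (insert z v) z = rk v z := by
  unfold rk
  rw [filter_insert]
  simp

lemma rk_add_rk {v G : Finset ℕ} (hv : v ⊆ G) (z : ℕ) :
    rk v z + rk (G \ v) z = rk G z := by
  unfold rk
  rw [← card_union_of_disjoint, ← filter_union, union_sdiff_of_subset hv]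
  exact disjoint_filter_filter sdiff_disjoint.symm

lemma rk_Gs {n z : ℕ} (h2 : 2 ≤ z) (hz : z < 2*n-1) : rk (Gs n) z = z - 2 := by
  unfold rk Gs
  have : (Finset.Ico 2 (2*n-1)).filter (· < z) = Finset.Ico 2 z := by
    ext x
    simp only [mem_filter, mem_Ico]
    omega
  rw [this, Nat.card_Ico]

lemma card_Gs (n : ℕ) : (Gs n).card = 2*n-1-2 := by
  unfold Gs; rw [Nat.card_Ico]

/-! ### modular injectivity lemmas -/

lemma add_mod_inj {n a b K : ℕ} (ha : a < n) (hb : b < n)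
    (h : (a + K) % n = (b + K) % n) : a = b := by
  have h1 : a ≡ b [MOD n] := Nat.ModEq.add_right_cancel rfl h
  exact Nat.ModEq.eq_of_lt_of_lt h1 ha hb

lemma res_inj {n B c1 c2 : ℕ} (hn : 2 ≤ n) (h1 : c1 < n) (h2 : c2 < n)
    (h : ((n-1)*(B+c1)) % n = ((n-1)*(B+c2)) % n) : c1 = c2 := by
  haveI : NeZero n := ⟨by omega⟩
  have hm : ((n-1)*(B+c1) : ℕ) ≡ (n-1)*(B+c2) [MOD n] := h
  have hc : (((n-1)*(B+c1) : ℕ) : ZMod n) = ((((n-1)*(B+c2) : ℕ) : ZMod n)) :=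
    (ZMod.natCast_eq_natCast_iff _ _ _).mpr hm
  have hneg : ((n-1 : ℕ) : ZMod n) = -1 := by
    rw [Nat.cast_sub (by omega : 1 ≤ n), ZMod.natCast_self, Nat.cast_one]
    ring
  rw [Nat.cast_mul, Nat.cast_mul, hneg, Nat.cast_add, Nat.cast_add] at hc
  rw [neg_one_mul, neg_one_mul] at hc
  have hc2 : ((B : ZMod n) + c1) = (B : ZMod n) + c2 := neg_injective hc
  have hc3 : ((c1 : ℕ) : ZMod n) = ((c2 : ℕ) : ZMod n) := add_left_cancel hc2
  have hc4 : c1 ≡ c2 [MOD n] := (ZMod.natCast_eq_natCast_iff _ _ _).mp hc3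
  exact Nat.ModEq.eq_of_lt_of_lt hc4 h1 h2

/-! ### chi lemmas -/

lemma chi_inj {a b : ℕ} (h : a ≠ b) : chi a ≠ chi b := by
  unfold chi; split_ifs <;> omega

lemma chi_ne_zero (a : ℕ) : chi a ≠ 0 := by unfold chi; split_ifs <;> omega

lemma chi_ne_two (a : ℕ) : chi a ≠ 2 := by unfold chi; split_ifs <;> omega

lemma chi_ne_add_two {a b : ℕ} (h : a ≠ b) : chi a ≠ b + 2 := by
  unfold chi; split_ifs <;> omega

lemma chi_lt {n a : ℕ} (h : a < n) : chi a < n + 2 := by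
  unfold chi; split_ifs <;> omega

/-! ### adjacency context -/

structure Ctx (n : ℕ) (S T : Finset ℕ) : Prop where
  hn : 2 ≤ n
  cS : S.card = n-1
  cT : T.card = n-1
  sS : S ⊆ Finset.range (2*n-1)
  sT : T ⊆ Finset.range (2*n-1)
  dj : Disjoint S T

namespace Ctx

variable {n : ℕ} {S T : Finset ℕ} (h : Ctx n S T)
include h

lemma compl_eq : Finset.range (2*n-1) \ (S ∪ T) = {zv n S T} := by
  have hsub : S ∪ T ⊆ Finset.range (2*n-1) := union_subset h.sS h.sT
  have hcard : (Finset.range (2*n-1) \ (S ∪ T)).card = 1 := by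
    rw [card_sdiff_of_subset hsub, card_union_of_disjoint h.dj, card_range, h.cS, h.cT]
    have := h.hn; omega
  obtain ⟨a, ha⟩ := card_eq_one.mp hcard
  have hz : zv n S T = a := by unfold zv; rw [ha]; simp
  rw [ha, hz]

lemma z_not_mem : zv n S T ∉ S ∪ T := by
  have : zv n S T ∈ Finset.range (2*n-1) \ (S ∪ T) := by rw [h.compl_eq]; simp
  exact (mem_sdiff.mp this).2

lemma z_lt : zv n S T < 2*n-1 := by
  have : zv n S T ∈ Finset.range (2*n-1) \ (S ∪ T) := by rw [h.compl_eq]; simp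
  exact mem_range.mp (mem_sdiff.mp this).1

lemma z_not_S : zv n S T ∉ S := fun hx => h.z_not_mem (mem_union_left _ hx)
lemma z_not_T : zv n S T ∉ T := fun hx => h.z_not_mem (mem_union_right _ hx)

lemma mem_T_iff {x : ℕ} : x ∈ T ↔ (x < 2*n-1 ∧ x ∉ S ∧ x ≠ zv n S T) := by
  constructor
  · intro hx
    refine ⟨mem_range.mp (h.sT hx), ?_, ?_⟩
    · exact fun hs => (disjoint_left.mp h.dj hs) hx
    · rintro rfl; exact h.z_not_T hx
  · rintro ⟨hlt, hnS, hnz⟩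
    by_contra hnT
    have hx : x ∈ Finset.range (2*n-1) \ (S ∪ T) := by
      simp only [mem_sdiff, mem_range, mem_union]
      exact ⟨hlt, by tauto⟩
    rw [h.compl_eq] at hx
    exact hnz (mem_singleton.mp hx)

lemma mem_union_iff {x : ℕ} : x ∈ S ∪ T ↔ (x < 2*n-1 ∧ x ≠ zv n S T) := by
  constructor
  · intro hx
    have hlt : x < 2*n-1 := mem_range.mp ((union_subset h.sS h.sT) hx)
    exact ⟨hlt, fun hz => h.z_not_mem (hz ▸ hx)⟩
  · rintro ⟨hlt, hnz⟩
    by_cases hs : x ∈ S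
    · exact mem_union_left _ hs
    · exact mem_union_right _ (h.mem_T_iff.mpr ⟨hlt, hs, hnz⟩)

lemma zero_mem_union_iff : (0 ∈ S ∪ T) ↔ zv n S T ≠ 0 := by
  rw [h.mem_union_iff]
  have := h.hn
  constructor
  · rintro ⟨_, hz⟩; exact fun he => hz he.symm
  · intro hz; exact ⟨by omega, fun he => hz he.symm⟩

lemma one_mem_union_iff : (1 ∈ S ∪ T) ↔ zv n S T ≠ 1 := by
  rw [h.mem_union_iff]
  have := h.hn
  constructor
  · rintro ⟨_, hz⟩; exact fun he => hz he.symm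
  · intro hz; exact ⟨by omega, fun he => hz he.symm⟩

/-- distinct neighbours have distinct missing elements -/
lemma z_injective {T' : Finset ℕ} (h' : Ctx n S T') (hzz : zv n S T = zv n S T') :
    T = T' := by
  ext x
  rw [h.mem_T_iff, h'.mem_T_iff, hzz]

/-! ### normal forms -/

lemma erase_subset_Gs (h0S : 0 ∈ S) (h1S : 1 ∉ S) : S.erase 0 ⊆ Gs n := by
  intro x hx
  obtain ⟨hx0, hxS⟩ := mem_erase.mp hx
  have hx1 : x ≠ 1 := fun he => h1S (he ▸ hxS)
  have := mem_range.mp (h.sS hxS)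
  simp only [Gs, mem_Ico]
  omega

lemma Gs_sdiff_T_eq (h0S : 0 ∈ S) (h1S : 1 ∉ S) (hz1 : zv n S T = 1) :
    Gs n \ T = S.erase 0 := by
  ext x
  simp only [mem_sdiff, Gs, mem_Ico, mem_erase]
  rw [h.mem_T_iff, hz1]
  constructor
  · rintro ⟨⟨h2x, hxN⟩, hxT⟩
    push_neg at hxT
    by_cases hxS : x ∈ S
    · exact ⟨by omega, hxS⟩
    · exact absurd (hxT hxN hxS) (by omega)
  · rintro ⟨hx0, hxS⟩
    have hx1 : x ≠ 1 := fun he => h1S (he ▸ hxS)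
    have hxN := mem_range.mp (h.sS hxS)
    refine ⟨⟨by omega, hxN⟩, ?_⟩
    rintro ⟨-, hns, -⟩
    exact hns hxS

lemma NF_A0 (h0S : 0 ∈ S) (h1S : 1 ∉ S) :
    ecol n S T = if zv n S T = 1
      then chi (((n-1) * ((S.erase 0).sum id + 2 + (n-1))) % n)
      else (((n-1) * ((S.erase 0).sum id + 2 + rk (Gs n \ S.erase 0) (zv n S T))) % n) + 2 := by
  have hn2 := h.hn
  have hz0 : zv n S T ≠ 0 := fun he => h.z_not_S (by rw [he]; exact h0S)
  unfold ecol
  rw [if_neg (not_not_intro (mem_union_left _ h0S))]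
  simp only [if_pos h0S]
  by_cases hz1 : zv n S T = 1
  · have h1U : 1 ∉ S ∪ T := fun hm => (h.one_mem_union_iff.mp hm) hz1
    rw [if_pos (Or.inr h1U), if_pos h1U, h.Gs_sdiff_T_eq h0S h1S hz1, if_pos hz1]
    congr 1
    have harith : (n-1) * ((S.erase 0).sum id + 2 + (n-1))
        = (n - 1 + (n-1) * (S.erase 0).sum id) + (n-1) * n := by
      obtain ⟨m, rfl⟩ : ∃ m, n = m + 1 := ⟨n - 1, by omega⟩
      simp only [Nat.add_sub_cancel]
      ring
    rw [harith, Nat.add_mul_mod_self_right]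
  · have h1U : 1 ∈ S ∪ T := h.one_mem_union_iff.mpr hz1
    rw [if_neg (by rintro (hc | hc); exact h1S hc; exact hc h1U), if_neg hz1]
    set z := zv n S T with hzdef
    have hvG : S.erase 0 ⊆ Gs n := h.erase_subset_Gs h0S h1S
    have hzv : z ∉ S.erase 0 := fun hx => h.z_not_S (mem_of_mem_erase hx)
    have h2z : 2 ≤ z := by omega
    have hsplit : rk (S.erase 0) z + rk (Gs n \ S.erase 0) z = z - 2 := by
      rw [rk_add_rk hvG, rk_Gs h2z h.z_lt]
    rw [rk_insert, sum_insert hzv]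
    set rv := rk (S.erase 0) z with hrv
    set c := rk (Gs n \ S.erase 0) z with hc
    have hzeq : z = rv + c + 2 := by omega
    congr 1
    have harith : rv + (n-1) * (id z + (S.erase 0).sum id)
        = n * rv + (n-1) * ((S.erase 0).sum id + 2 + c) := by
      rw [show id z = z from rfl, hzeq]
      obtain ⟨m, rfl⟩ : ∃ m, n = m + 1 := ⟨n - 1, by omega⟩
      simp only [Nat.add_sub_cancel]
      ring
    rw [harith, Nat.mul_add_mod]

lemma insert_T_erase_eq (h1S : 1 ∈ S) (h0S : 0 ∉ S) (hz2 : 2 ≤ zv n S T) :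
    insert (zv n S T) (T.erase 0) = Gs n \ S := by
  have hzN := h.z_lt
  ext x
  simp only [mem_insert, mem_erase, mem_sdiff, Gs, mem_Ico]
  rw [h.mem_T_iff]
  constructor
  · rintro (rfl | ⟨hx0, hxN, hxS, hxz⟩)
    · exact ⟨⟨hz2, hzN⟩, h.z_not_S⟩
    · have hx1 : x ≠ 1 := fun he => hxS (he ▸ h1S)
      exact ⟨⟨by omega, hxN⟩, hxS⟩
  · rintro ⟨⟨h2x, hxN⟩, hxS⟩
    by_cases hxz : x = zv n S T
    · exact Or.inl hxz
    · exact Or.inr ⟨by omega, hxN, hxS, hxz⟩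

lemma NF_A1 (h1S : 1 ∈ S) (h0S : 0 ∉ S) :
    ecol n S T = if zv n S T = 0 then 0
      else ((rk (Gs n \ S) (zv n S T) + (n-1) * (Gs n \ S).sum id) % n) + 2 := by
  have hn2 := h.hn
  have hz1 : zv n S T ≠ 1 := fun he => h.z_not_S (by rw [he]; exact h1S)
  by_cases hz0 : zv n S T = 0
  · have h0U : 0 ∉ S ∪ T := fun hm => (h.zero_mem_union_iff.mp hm) hz0
    unfold ecol
    rw [if_pos h0U, if_pos hz0]
  · have h0U : 0 ∈ S ∪ T := h.zero_mem_union_iff.mpr hz0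
    have h1U : 1 ∈ S ∪ T := h.one_mem_union_iff.mpr hz1
    have h1T : 1 ∉ T := fun hm => (disjoint_left.mp h.dj h1S) hm
    unfold ecol
    rw [if_neg (not_not_intro h0U)]
    simp only [if_neg h0S]
    rw [if_neg (by rintro (hc | hc); exact h1T hc; exact hc h1U), if_neg hz0,
      h.insert_T_erase_eq h1S h0S (by omega)]

lemma w_subset_Gs (h0S : 0 ∈ S) (h1S : 1 ∈ S) : (S.erase 0).erase 1 ⊆ Gs n := by
  intro x hx
  have h1 := mem_erase.mp hx
  have h2' := mem_erase.mp h1.2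
  have hx1 := h1.1
  have hx0 := h2'.1
  have hxS := h2'.2
  have := mem_range.mp (h.sS hxS)
  simp only [Gs, mem_Ico]
  omega

lemma Gs_sdiff_T_eq' (h0S : 0 ∈ S) (h1S : 1 ∈ S) :
    Gs n \ T = insert (zv n S T) ((S.erase 0).erase 1) := by
  have hz0 : zv n S T ≠ 0 := fun he => h.z_not_S (by rw [he]; exact h0S)
  have hz1 : zv n S T ≠ 1 := fun he => h.z_not_S (by rw [he]; exact h1S)
  have hzN := h.z_lt
  ext x
  simp only [mem_sdiff, Gs, mem_Ico, mem_insert, mem_erase]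
  rw [h.mem_T_iff]
  constructor
  · rintro ⟨⟨h2x, hxN⟩, hxT⟩
    push_neg at hxT
    by_cases hxz : x = zv n S T
    · exact Or.inl hxz
    · by_cases hxS : x ∈ S
      · exact Or.inr ⟨by omega, by omega, hxS⟩
      · exact absurd (hxT hxN hxS) hxz
  · rintro (rfl | ⟨hx1, hx0, hxS⟩)
    · refine ⟨⟨by omega, hzN⟩, ?_⟩
      rintro ⟨-, -, hne⟩; exact hne rfl
    · have hxN := mem_range.mp (h.sS hxS)
      refine ⟨⟨by omega, hxN⟩, ?_⟩
      rintro ⟨-, hns, -⟩; exact hns hxS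

lemma NF_A01 (h0S : 0 ∈ S) (h1S : 1 ∈ S) :
    ecol n S T = chi (((n-1) * ((((S.erase 0).erase 1)).sum id + 2
      + rk (Gs n \ ((S.erase 0).erase 1)) (zv n S T))) % n) := by
  have hn2 := h.hn
  have hz0 : zv n S T ≠ 0 := fun he => h.z_not_S (by rw [he]; exact h0S)
  have hz1 : zv n S T ≠ 1 := fun he => h.z_not_S (by rw [he]; exact h1S)
  have h1U : 1 ∈ S ∪ T := h.one_mem_union_iff.mpr hz1
  unfold ecol
  rw [if_neg (not_not_intro (mem_union_left _ h0S))]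
  simp only [if_pos h0S]
  rw [if_pos (Or.inl h1S), if_neg (not_not_intro h1U), h.Gs_sdiff_T_eq' h0S h1S]
  set z := zv n S T with hzdef
  set w := (S.erase 0).erase 1 with hw
  have hwG : w ⊆ Gs n := h.w_subset_Gs h0S h1S
  have hzw : z ∉ w := fun hx => h.z_not_S (mem_of_mem_erase (mem_of_mem_erase hx))
  have h2z : 2 ≤ z := by omega
  have hsplit : rk w z + rk (Gs n \ w) z = z - 2 := by
    rw [rk_add_rk hwG, rk_Gs h2z h.z_lt]
  rw [rk_insert, sum_insert hzw]
  set rv := rk w z with hrv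
  set c := rk (Gs n \ w) z with hc
  have hzeq : z = rv + c + 2 := by omega
  congr 1
  have harith : rv + (n-1) * (id z + w.sum id)
      = n * rv + (n-1) * (w.sum id + 2 + c) := by
    rw [show id z = z from rfl, hzeq]
    obtain ⟨m, rfl⟩ : ∃ m, n = m + 1 := ⟨n - 1, by omega⟩
    simp only [Nat.add_sub_cancel]
    ring
  rw [harith, Nat.mul_add_mod]

lemma NF_R (h0S : 0 ∉ S) (h1S : 1 ∉ S) :
    ecol n S T = if zv n S T = 0 then 0 else
      chi (((if zv n S T = 1 then n-1 else rk (Gs n \ S) (zv n S T))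
        + (n-1) * (Gs n \ S).sum id) % n) := by
  have hn2 := h.hn
  by_cases hz0 : zv n S T = 0
  · have h0U : 0 ∉ S ∪ T := fun hm => (h.zero_mem_union_iff.mp hm) hz0
    unfold ecol
    rw [if_pos h0U, if_pos hz0]
  · have h0U : 0 ∈ S ∪ T := h.zero_mem_union_iff.mpr hz0
    have h0T : 0 ∈ T := by
      rcases mem_union.mp h0U with hc | hc
      · exact absurd hc h0S
      · exact hc
    unfold ecol
    rw [if_neg (not_not_intro h0U)]
    simp only [if_neg h0S]
    rw [if_neg hz0]
    by_cases hz1 : zv n S T = 1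
    · have h1U : 1 ∉ S ∪ T := fun hm => (h.one_mem_union_iff.mp hm) hz1
      rw [if_pos (Or.inr h1U), if_pos h1U, if_pos hz1]
    · have h1U : 1 ∈ S ∪ T := h.one_mem_union_iff.mpr hz1
      have h1T : 1 ∈ T := by
        rcases mem_union.mp h1U with hc | hc
        · exact absurd hc h1S
        · exact hc
      rw [if_pos (Or.inl h1T), if_neg (not_not_intro h1U), if_neg hz1]

end Ctx

/-! ### cardinality facts -/

namespace Ctx
variable {n : ℕ} {S T : Finset ℕ} (h : Ctx n S T)
include h

lemma card_A0 (h0S : 0 ∈ S) (h1S : 1 ∉ S) : (Gs n \ S.erase 0).card = n - 1 := by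
  rw [card_sdiff_of_subset (h.erase_subset_Gs h0S h1S), card_Gs, card_erase_of_mem h0S, h.cS]
  have := h.hn; omega

lemma card_R (h0S : 0 ∉ S) (h1S : 1 ∉ S) : (Gs n \ S).card = n - 2 := by
  have hsub : S ⊆ Gs n := by
    intro x hx
    have hx0 : x ≠ 0 := fun he => h0S (he ▸ hx)
    have hx1 : x ≠ 1 := fun he => h1S (he ▸ hx)
    have := mem_range.mp (h.sS hx)
    simp only [Gs, mem_Ico]; omega
  rw [card_sdiff_of_subset hsub, card_Gs, h.cS]
  have := h.hn; omega

lemma card_A1 (h1S : 1 ∈ S) (h0S : 0 ∉ S) : (Gs n \ S).card = n - 1 := by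
  have heq : Gs n \ S = Gs n \ (S.erase 1) := by
    ext x
    simp only [mem_sdiff, Gs, mem_Ico, mem_erase]
    constructor
    · rintro ⟨hx, hxs⟩; exact ⟨hx, fun hc => hxs hc.2⟩
    · rintro ⟨hx, hxs⟩
      refine ⟨hx, fun hc => hxs ⟨by omega, hc⟩⟩
  have hsub : S.erase 1 ⊆ Gs n := by
    intro x hx
    obtain ⟨hx1, hxS⟩ := mem_erase.mp hx
    have hx0 : x ≠ 0 := fun he => h0S (he ▸ hxS)
    have := mem_range.mp (h.sS hxS)
    simp only [Gs, mem_Ico]; omega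
  rw [heq, card_sdiff_of_subset hsub, card_Gs, card_erase_of_mem h1S, h.cS]
  have := h.hn; omega

lemma card_A01 (h0S : 0 ∈ S) (h1S : 1 ∈ S) : (Gs n \ (S.erase 0).erase 1).card = n := by
  have hn3 : 3 ≤ n := by
    have hsub : ({0, 1} : Finset ℕ) ⊆ S := by
      intro x hx
      rcases mem_insert.mp hx with rfl | hx
      · exact h0S
      · rw [mem_singleton.mp hx]; exact h1S
    have := card_le_card hsub
    rw [h.cS] at this
    simp at this
    omega
  have h1e : 1 ∈ S.erase 0 := mem_erase.mpr ⟨one_ne_zero, h1S⟩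
  rw [card_sdiff_of_subset (h.w_subset_Gs h0S h1S), card_Gs, card_erase_of_mem h1e,
    card_erase_of_mem h0S, h.cS]
  omega

/-! ### membership of z -/

lemma z_mem_A0 (h1S : 1 ∉ S) (hz1 : zv n S T ≠ 1) (hz0 : zv n S T ≠ 0) :
    zv n S T ∈ Gs n \ S.erase 0 := by
  simp only [mem_sdiff, Gs, mem_Ico, mem_erase]
  have := h.z_lt
  exact ⟨⟨by omega, this⟩, fun hc => h.z_not_S hc.2⟩

lemma z_mem_R (hz1 : zv n S T ≠ 1) (hz0 : zv n S T ≠ 0) :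
    zv n S T ∈ Gs n \ S := by
  simp only [mem_sdiff, Gs, mem_Ico]
  have := h.z_lt
  exact ⟨⟨by omega, this⟩, h.z_not_S⟩

lemma z_mem_A01 (h0S : 0 ∈ S) (h1S : 1 ∈ S) :
    zv n S T ∈ Gs n \ (S.erase 0).erase 1 := by
  have hz0 : zv n S T ≠ 0 := fun he => h.z_not_S (by rw [he]; exact h0S)
  have hz1 : zv n S T ≠ 1 := fun he => h.z_not_S (by rw [he]; exact h1S)
  simp only [mem_sdiff, Gs, mem_Ico, mem_erase]
  have := h.z_lt
  exact ⟨⟨by omega, this⟩, fun hc => h.z_not_S hc.2.2⟩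

end Ctx

/-! ### injectivity of the edge colouring around a vertex -/

section Inj
variable {n : ℕ} {S T1 T2 : Finset ℕ}

lemma inj_A0 (h1 : Ctx n S T1) (h2 : Ctx n S T2) (h0S : 0 ∈ S) (h1S : 1 ∉ S)
    (hT : T1 ≠ T2) : ecol n S T1 ≠ ecol n S T2 := by
  have hn2 := h1.hn
  have hzz : zv n S T1 ≠ zv n S T2 := fun he => hT (h1.z_injective h2 he)
  have hz01 : zv n S T1 ≠ 0 := fun he => h1.z_not_S (by rw [he]; exact h0S)
  have hz02 : zv n S T2 ≠ 0 := fun he => h2.z_not_S (by rw [he]; exact h0S)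
  have hcard := h1.card_A0 h0S h1S
  rw [h1.NF_A0 h0S h1S, h2.NF_A0 h0S h1S]
  by_cases ha : zv n S T1 = 1 <;> by_cases hb : zv n S T2 = 1
  · exact absurd (ha.trans hb.symm) hzz
  · rw [if_pos ha, if_neg hb]
    apply chi_ne_add_two
    intro hres
    have hm := h2.z_mem_A0 h1S hb hz02
    have hr2 : rk (Gs n \ S.erase 0) (zv n S T2) < n - 1 := hcard ▸ rk_lt_card hm
    have := res_inj hn2 (by omega) (by omega : rk (Gs n \ S.erase 0) (zv n S T2) < n) hres
    omega
  · rw [if_neg ha, if_pos hb]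
    intro heq
    have hres : ((n-1) * ((S.erase 0).sum id + 2 + rk (Gs n \ S.erase 0) (zv n S T1))) % n
        = ((n-1) * ((S.erase 0).sum id + 2 + (n-1))) % n := by
      have := (chi_ne_add_two (a := ((n-1) * ((S.erase 0).sum id + 2 + (n-1))) % n)
        (b := ((n-1) * ((S.erase 0).sum id + 2 + rk (Gs n \ S.erase 0) (zv n S T1))) % n))
      by_contra hne
      exact (this (fun hc => hne hc.symm)) heq.symm
    have hm := h1.z_mem_A0 h1S ha hz01
    have hr1 : rk (Gs n \ S.erase 0) (zv n S T1) < n - 1 := hcard ▸ rk_lt_card hm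
    have := res_inj hn2 (by omega : rk (Gs n \ S.erase 0) (zv n S T1) < n) (by omega) hres
    omega
  · rw [if_neg ha, if_neg hb]
    intro heq
    have hm1 := h1.z_mem_A0 h1S ha hz01
    have hm2 := h2.z_mem_A0 h1S hb hz02
    have hr1 : rk (Gs n \ S.erase 0) (zv n S T1) < n - 1 := hcard ▸ rk_lt_card hm1
    have hr2 : rk (Gs n \ S.erase 0) (zv n S T2) < n - 1 := hcard ▸ rk_lt_card hm2
    have heq2 : ((n-1) * ((S.erase 0).sum id + 2 + rk (Gs n \ S.erase 0) (zv n S T1))) % n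
        = ((n-1) * ((S.erase 0).sum id + 2 + rk (Gs n \ S.erase 0) (zv n S T2))) % n := by
      omega
    have hres := res_inj hn2 (by omega : rk (Gs n \ S.erase 0) (zv n S T1) < n)
      (by omega : rk (Gs n \ S.erase 0) (zv n S T2) < n) heq2
    exact hzz (rk_inj hm1 hm2 hres)

lemma inj_A1 (h1 : Ctx n S T1) (h2 : Ctx n S T2) (h1S : 1 ∈ S) (h0S : 0 ∉ S)
    (hT : T1 ≠ T2) : ecol n S T1 ≠ ecol n S T2 := by
  have hn2 := h1.hn
  have hzz : zv n S T1 ≠ zv n S T2 := fun he => hT (h1.z_injective h2 he)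
  have hz11 : zv n S T1 ≠ 1 := fun he => h1.z_not_S (by rw [he]; exact h1S)
  have hz12 : zv n S T2 ≠ 1 := fun he => h2.z_not_S (by rw [he]; exact h1S)
  have hcard := h1.card_A1 h1S h0S
  rw [h1.NF_A1 h1S h0S, h2.NF_A1 h1S h0S]
  by_cases ha : zv n S T1 = 0 <;> by_cases hb : zv n S T2 = 0
  · exact absurd (ha.trans hb.symm) hzz
  · rw [if_pos ha, if_neg hb]; omega
  · rw [if_neg ha, if_pos hb]; omega
  · rw [if_neg ha, if_neg hb]
    intro heq
    have hm1 := h1.z_mem_R hz11 ha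
    have hm2 := h2.z_mem_R hz12 hb
    have hr1 : rk (Gs n \ S) (zv n S T1) < n - 1 := hcard ▸ rk_lt_card hm1
    have hr2 : rk (Gs n \ S) (zv n S T2) < n - 1 := hcard ▸ rk_lt_card hm2
    have heq2 : (rk (Gs n \ S) (zv n S T1) + (n-1) * (Gs n \ S).sum id) % n
        = (rk (Gs n \ S) (zv n S T2) + (n-1) * (Gs n \ S).sum id) % n := by
      omega
    have := add_mod_inj (n := n) (by omega : rk (Gs n \ S) (zv n S T1) < n)
      (by omega : rk (Gs n \ S) (zv n S T2) < n) heq2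
    exact hzz (rk_inj hm1 hm2 this)

lemma inj_A01 (h1 : Ctx n S T1) (h2 : Ctx n S T2) (h0S : 0 ∈ S) (h1S : 1 ∈ S)
    (hT : T1 ≠ T2) : ecol n S T1 ≠ ecol n S T2 := by
  have hn2 := h1.hn
  have hzz : zv n S T1 ≠ zv n S T2 := fun he => hT (h1.z_injective h2 he)
  have hcard := h1.card_A01 h0S h1S
  rw [h1.NF_A01 h0S h1S, h2.NF_A01 h0S h1S]
  apply chi_inj
  intro hres
  have hm1 := h1.z_mem_A01 h0S h1S
  have hm2 := h2.z_mem_A01 h0S h1S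
  have hr1 : rk (Gs n \ (S.erase 0).erase 1) (zv n S T1) < n := by
    have := rk_lt_card hm1; rw [hcard] at this; exact this
  have hr2 : rk (Gs n \ (S.erase 0).erase 1) (zv n S T2) < n := by
    have := rk_lt_card hm2; rw [hcard] at this; exact this
  exact hzz (rk_inj hm1 hm2 (res_inj hn2 hr1 hr2 hres))

lemma inj_R (h1 : Ctx n S T1) (h2 : Ctx n S T2) (h0S : 0 ∉ S) (h1S : 1 ∉ S)
    (hT : T1 ≠ T2) : ecol n S T1 ≠ ecol n S T2 := by
  have hn2 := h1.hn
  have hzz : zv n S T1 ≠ zv n S T2 := fun he => hT (h1.z_injective h2 he)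
  have hcard := h1.card_R h0S h1S
  rw [h1.NF_R h0S h1S, h2.NF_R h0S h1S]
  by_cases ha : zv n S T1 = 0 <;> by_cases hb : zv n S T2 = 0
  · exact absurd (ha.trans hb.symm) hzz
  · rw [if_pos ha, if_neg hb]; exact fun he => chi_ne_zero _ he.symm
  · rw [if_neg ha, if_pos hb]; exact chi_ne_zero _
  · rw [if_neg ha, if_neg hb]
    apply chi_inj
    intro heq
    have hkey : (if zv n S T1 = 1 then n-1 else rk (Gs n \ S) (zv n S T1))
        = (if zv n S T2 = 1 then n-1 else rk (Gs n \ S) (zv n S T2)) := by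
      apply add_mod_inj (n := n) ?_ ?_ heq <;> split_ifs
      · omega
      · have := rk_lt_card (h1.z_mem_R (by assumption) ha); omega
      · omega
      · have := rk_lt_card (h2.z_mem_R (by assumption) hb); omega
    by_cases hc : zv n S T1 = 1 <;> by_cases hd : zv n S T2 = 1
    · exact hzz (hc.trans hd.symm)
    · rw [if_pos hc, if_neg hd] at hkey
      have := rk_lt_card (h2.z_mem_R hd hb)
      omega
    · rw [if_neg hc, if_pos hd] at hkey
      have := rk_lt_card (h1.z_mem_R hc ha)
      omega
    · rw [if_neg hc, if_neg hd] at hkey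
      exact hzz (rk_inj (h1.z_mem_R hc ha) (h2.z_mem_R hd hb) hkey)

/-- master injectivity lemma -/
lemma ecol_injective (h1 : Ctx n S T1) (h2 : Ctx n S T2) (hT : T1 ≠ T2) :
    ecol n S T1 ≠ ecol n S T2 := by
  by_cases h0S : 0 ∈ S <;> by_cases h1S : 1 ∈ S
  · exact inj_A01 h1 h2 h0S h1S hT
  · exact inj_A0 h1 h2 h0S h1S hT
  · exact inj_A1 h1 h2 h1S h0S hT
  · exact inj_R h1 h2 h0S h1S hT

end Inj

/-! ### symmetry, bounds, vertex colours -/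

namespace Ctx
variable {n : ℕ} {S T : Finset ℕ} (h : Ctx n S T)
include h

lemma ecol_symm : ecol n S T = ecol n T S := by
  unfold ecol zv
  rw [union_comm T S]
  by_cases h0S : 0 ∈ S
  · have h0T : 0 ∉ T := disjoint_left.mp h.dj h0S
    simp only [if_pos h0S, if_neg h0T]
  · by_cases h0T : 0 ∈ T
    · simp only [if_neg h0S, if_pos h0T]
    · have h0U : 0 ∉ S ∪ T := by simp [h0S, h0T]
      rw [if_pos h0U, if_pos h0U]

lemma vcol_ne : vcol S ≠ vcol T := by
  by_cases h0S : 0 ∈ S <;> by_cases h0T : 0 ∈ T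
  · exact absurd h0T (disjoint_left.mp h.dj h0S)
  · simp only [vcol, if_pos h0S, if_neg h0T]
    split_ifs <;> omega
  · simp only [vcol, if_neg h0S, if_pos h0T]
    split_ifs <;> omega
  · by_cases h1S : 1 ∈ S <;> by_cases h1T : 1 ∈ T
    · exact absurd h1T (disjoint_left.mp h.dj h1S)
    · simp only [vcol, if_neg h0S, if_neg h0T, if_pos h1S, if_neg h1T]
      omega
    · simp only [vcol, if_neg h0S, if_neg h0T, if_neg h1S, if_pos h1T]
      omega
    · exfalso
      have hsub : S ∪ T ⊆ Gs n := by
        intro x hx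
        have hx0 : x ≠ 0 := by
          rintro rfl; exact (mem_union.mp hx).elim h0S h0T
        have hx1 : x ≠ 1 := by
          rintro rfl; exact (mem_union.mp hx).elim h1S h1T
        have hxN : x < 2*n-1 := mem_range.mp ((union_subset h.sS h.sT) hx)
        simp only [Gs, mem_Ico]; omega
      have hle := card_le_card hsub
      rw [card_union_of_disjoint h.dj, h.cS, h.cT, card_Gs] at hle
      have := h.hn
      omega

lemma ecol_ne_vcol : ecol n S T ≠ vcol S := by
  have hn2 := h.hn
  by_cases h0S : 0 ∈ S <;> by_cases h1S : 1 ∈ S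
  · rw [h.NF_A01 h0S h1S]
    simp only [vcol, if_pos h0S]
    exact chi_ne_zero _
  · rw [h.NF_A0 h0S h1S]
    simp only [vcol, if_pos h0S]
    split_ifs
    · exact chi_ne_zero _
    · omega
  · rw [h.NF_A1 h1S h0S]
    simp only [vcol, if_neg h0S, if_pos h1S]
    split_ifs <;> omega
  · rw [h.NF_R h0S h1S]
    simp only [vcol, if_neg h0S, if_neg h1S]
    split_ifs <;> first | omega | exact chi_ne_two _

end Ctx

lemma ecol_lt {n : ℕ} (hn : 2 ≤ n) (S T : Finset ℕ) : ecol n S T < n + 2 := by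
  unfold ecol
  split_ifs <;>
    first
      | omega
      | exact chi_lt (Nat.mod_lt _ (by omega))
      | (apply Nat.add_lt_add_right
         exact Nat.mod_lt _ (by omega))

lemma vcol_lt {n : ℕ} (hn : 2 ≤ n) (S : Finset ℕ) : vcol S < n + 2 := by
  unfold vcol; split_ifs <;> omega

end OddTCC




/-- The odd graph `O_n`: vertices are the `(n-1)`-element subsets of a fixed
`(2n-1)`-element set, with two vertices adjacent iff the subsets are disjoint. -/
def oddGraph (n : ℕ) :
    SimpleGraph {s : Finset (Fin (2 * n - 1)) // s.card = n - 1} where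
  Adj s t := s ≠ t ∧ Disjoint (s : Finset (Fin (2 * n - 1))) (t : Finset (Fin (2 * n - 1)))
  symm := ⟨fun _ _ h => ⟨h.1.symm, h.2.symm⟩⟩
  loopless := ⟨fun _ h => h.1 rfl⟩

/-- For every `n ≥ 2`, the odd graph `O_n` (which is `n`-regular) admits a
proper total coloring with `n + 2 = Δ(O_n) + 2` colors, i.e. it satisfies the
Total Coloring Conjecture. -/
theorem oddGraph_tcc (n : ℕ) (hn : 2 ≤ n) :
    TotalColorable (oddGraph n) (n + 2) := by
  classical
  let im : {s : Finset (Fin (2 * n - 1)) // s.card = n - 1} → Finset ℕ :=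
    fun s => s.1.image Fin.val
  have him_card : ∀ s, (im s).card = n-1 := fun s => by
    simp only [im]
    rw [Finset.card_image_of_injective _ Fin.val_injective, s.2]
  have him_sub : ∀ s, im s ⊆ Finset.range (2*n-1) := fun s => by
    intro x hx
    obtain ⟨a, -, rfl⟩ := Finset.mem_image.mp hx
    exact Finset.mem_range.mpr a.isLt
  have hctx : ∀ u v, (oddGraph n).Adj u v → OddTCC.Ctx n (im u) (im v) := by
    intro u v huv
    exact ⟨hn, him_card u, him_card v, him_sub u, him_sub v,
      (Finset.disjoint_image Fin.val_injective).mpr huv.2⟩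
  have him_inj : ∀ u v : {s : Finset (Fin (2 * n - 1)) // s.card = n - 1},
      u ≠ v → im u ≠ im v := by
    intro u v huv he
    exact huv (Subtype.ext (Finset.image_injective Fin.val_injective he))
  refine ⟨fun s => ⟨OddTCC.vcol (im s), OddTCC.vcol_lt hn _⟩,
    fun s t => ⟨OddTCC.ecol n (im s) (im t), OddTCC.ecol_lt hn _ _⟩, ?_, ?_, ?_, ?_⟩
  · intro u v huv
    simp only [ne_eq, Fin.mk.injEq]
    exact (hctx u v huv).vcol_ne
  · intro u v huv
    simp only [Fin.mk.injEq]
    exact (hctx u v huv).ecol_symm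
  · intro u v w huv huw hvw
    simp only [ne_eq, Fin.mk.injEq]
    exact OddTCC.ecol_injective (hctx u v huv) (hctx u w huw) (him_inj v w hvw)
  · intro u v huv
    constructor
    · simp only [ne_eq, Fin.mk.injEq]
      exact (hctx u v huv).ecol_ne_vcol
    · simp only [ne_eq, Fin.mk.injEq]
      rw [(hctx u v huv).ecol_symm]
      exact (hctx v u ((oddGraph n).adj_symm huv)).ecol_ne_vcol
end
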